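/- arXiv:1211.4881 — 6 statements merged into one kernel-verified Lean document; each statement's English description precedes it below -/
import Mathlib

section
/- Let v=(v_1,...,v_d) be nonnegative integers with v_1+...+v_d = k > 0 and v_1+2v_2+...+d*v_d = n. Define W_{m,l}(v) = sum over tuples i in N_0^d with i_1+...+i_d = l and i_1+2i_2+...+d*i_d = m of C(v_1,i_1)*...*C(v_d,i_d). Let alpha(l,m) = A*l + B*m + C be an affine function with alpha(l,m) nonzero at the relevant points. Then for any complex tau, the double sum over l=0..k and m=l..n of [alpha(k,n)/alpha(l,m)] * C(alpha(l,m), k-l) * C(tau - alpha(l,m), l) / C(k,l) * W_{m,l}(v) equals C(tau,k). -/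
open Finset

noncomputable def gchoose (x : ℂ) (j : ℕ) : ℂ :=
  (∏ i ∈ Finset.range j, (x - (i : ℂ))) / (j.factorial : ℂ)

/-- The set of tuples `i : Fin d → ℕ` with `∑ i_j = k` and `∑ j * i_j = n`
(indices weighted by `j+1`). -/
def parts (d n k : ℕ) : Finset (Fin d → ℕ) :=
  (Fintype.piFinset fun _ : Fin d => Finset.range (n + 1)).filter
    fun i => (∑ j, i j) = k ∧ (∑ j : Fin d, ((j : ℕ) + 1) * i j) = n

/-- `W d m l v = ∑_{i ∈ π_d(m,l)} ∏_r C(v_r, i_r)`. -/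
def W (d m l : ℕ) (v : Fin d → ℕ) : ℕ :=
  ∑ i ∈ parts d m l, ∏ r, (v r).choose (i r)

section Auxiliary

open Polynomial

lemma gchoose_zero (x : ℂ) : gchoose x 0 = 1 := by simp [gchoose]

lemma descPoch_smeval (x : ℂ) (j : ℕ) :
    (descPochhammer ℤ j).smeval x = ∏ i ∈ Finset.range j, (x - (i : ℂ)) := by
  induction j with
  | zero => simp [descPochhammer_zero, Polynomial.smeval_one]
  | succ j ih =>
    rw [descPochhammer_succ_right, Polynomial.smeval_mul, ih, Finset.prod_range_succ,
      Polynomial.smeval_sub, Polynomial.smeval_X, Polynomial.smeval_natCast]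
    ring

lemma gchoose_eq (x : ℂ) (j : ℕ) : gchoose x j = Ring.choose x j := by
  have h := Ring.descPochhammer_eq_factorial_smul_choose (R := ℂ) x j
  rw [descPoch_smeval] at h
  have hj : (j.factorial : ℂ) ≠ 0 := by exact_mod_cast j.factorial_ne_zero
  rw [gchoose, h, nsmul_eq_mul, mul_comm, mul_div_assoc, div_self hj, mul_one]

lemma gchoose_vandermonde (x y : ℂ) (l : ℕ) :
    gchoose (x + y) l = ∑ j ∈ Finset.range (l + 1), gchoose x j * gchoose y (l - j) := by
  rw [gchoose_eq, Ring.add_choose_eq l (Commute.all x y)]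
  rw [Finset.Nat.sum_antidiagonal_eq_sum_range_succ_mk]
  exact Finset.sum_congr rfl fun j _ => by rw [gchoose_eq, gchoose_eq]

lemma diff_step (Q : Polynomial ℂ) (b : ℂ) (hQ0 : Q ≠ 0) (hQc : Q - Q.comp (X + C b) ≠ 0) :
    (Q - Q.comp (X + C b)).degree < Q.degree := by
  have hc0 : Q.comp (X + C b) ≠ 0 := by
    intro h
    rw [← Polynomial.taylor_apply] at h
    exact hQ0 (Polynomial.taylor_injective b (by simpa using h))
  have hnd : (Q.comp (X + C b)).natDegree = Q.natDegree := by
    rw [← Polynomial.taylor_apply, Polynomial.natDegree_taylor]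
  apply Polynomial.degree_sub_lt
  · rw [Polynomial.degree_eq_natDegree hQ0, Polynomial.degree_eq_natDegree hc0, hnd]
  · exact hQ0
  · rw [Polynomial.leadingCoeff_comp (by rw [Polynomial.natDegree_X_add_C]; omega),
      Polynomial.leadingCoeff_X_add_C, one_pow, mul_one]

lemma diff_lemma {ι : Type*} [DecidableEq ι] (s : Finset ι) :
    ∀ (Q : Polynomial ℂ), Q.degree < (s.card : ℕ) → ∀ (β : ι → ℂ) (c : ℂ),
    ∑ S ∈ s.powerset, (-1 : ℂ) ^ S.card * Q.eval (c + ∑ r ∈ S, β r) = 0 := by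
  induction s using Finset.induction_on with
  | empty =>
    intro Q hQ β c
    have : Q = 0 := by
      rw [← Polynomial.degree_eq_bot]
      simpa [Nat.WithBot.lt_zero_iff] using hQ
    simp [this]
  | @insert a s ha ih =>
    intro Q hQ β c
    have hdeg : Q.degree ≤ (s.card : ℕ) := by
      rcases le_or_gt Q.degree s.card with h | h
      · exact h
      · exfalso
        have h2 := Nat.WithBot.add_one_le_of_lt h
        rw [Finset.card_insert_of_notMem ha] at hQ
        push_cast at hQ
        exact absurd (lt_of_le_of_lt h2 hQ) (lt_irrefl _)
    rw [Finset.powerset_insert, Finset.sum_union]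
    · rw [Finset.sum_image (fun x hx y hy h => by
        have : ∀ z ∈ s.powerset, (insert a z).erase a = z := fun z hz => by
          rw [Finset.erase_insert (fun hc => ha (Finset.mem_powerset.1 hz hc))]
        rw [← this x hx, ← this y hy, h])]
      rw [← Finset.sum_add_distrib]
      have key : ∀ S ∈ s.powerset,
          (-1:ℂ) ^ S.card * Q.eval (c + ∑ r ∈ S, β r)
          + (-1:ℂ) ^ (insert a S).card * Q.eval (c + ∑ r ∈ insert a S, β r)
          = (-1:ℂ) ^ S.card * (Q - Q.comp (X + C (β a))).eval (c + ∑ r ∈ S, β r) := by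
        intro S hS
        have haS : a ∉ S := fun hc => ha (Finset.mem_powerset.1 hS hc)
        rw [Finset.card_insert_of_notMem haS, Finset.sum_insert haS, pow_succ]
        simp only [Polynomial.eval_sub, Polynomial.eval_comp, Polynomial.eval_add,
          Polynomial.eval_X, Polynomial.eval_C]
        ring_nf
      rw [Finset.sum_congr rfl key]
      by_cases hQ0 : Q = 0
      · simp [hQ0]
      by_cases hQc : Q - Q.comp (X + C (β a)) = 0
      · simp [hQc]
      · exact ih _ (lt_of_lt_of_le (diff_step Q (β a) hQ0 hQc) hdeg) β c
    · rw [Finset.disjoint_left]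
      intro S hS hS'
      obtain ⟨T, hT, rfl⟩ := Finset.mem_image.1 hS'
      exact ha (Finset.mem_powerset.1 hS (Finset.mem_insert_self a T))

lemma master {ι : Type*} [Fintype ι] [DecidableEq ι] (β : ι → ℂ) (c : ℂ) (j : ℕ)
    (Q : Polynomial ℂ)
    (hQD : Q.degree < ((Fintype.card ι - j : ℕ) : WithBot ℕ)) :
    ∑ S ∈ (univ : Finset ι).powerset,
      (-1 : ℂ) ^ S.card * (S.card.choose j : ℂ) * Q.eval (c + ∑ p ∈ S, β p) = 0 := by
  calc ∑ S ∈ (univ : Finset ι).powerset,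
        (-1 : ℂ) ^ S.card * (S.card.choose j : ℂ) * Q.eval (c + ∑ p ∈ S, β p)
      = ∑ S ∈ (univ : Finset ι).powerset, ∑ _T ∈ S.powersetCard j,
          (-1 : ℂ) ^ S.card * Q.eval (c + ∑ p ∈ S, β p) := by
        refine Finset.sum_congr rfl fun S _ => ?_
        rw [Finset.sum_const, Finset.card_powersetCard, nsmul_eq_mul]
        ring
    _ = ∑ T ∈ (univ : Finset ι).powersetCard j,
          ∑ S ∈ (univ : Finset ι).powerset.filter (fun S => T ⊆ S),
          (-1 : ℂ) ^ S.card * Q.eval (c + ∑ p ∈ S, β p) := by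
        refine Finset.sum_comm' fun S T => ?_
        simp only [Finset.mem_powerset, Finset.mem_powersetCard, Finset.mem_filter]
        exact ⟨fun ⟨h1, h2, h3⟩ => ⟨⟨h1, h2⟩, Finset.subset_univ _, h3⟩,
          fun ⟨⟨h1, h2⟩, _, h3⟩ => ⟨h1, h2, h3⟩⟩
    _ = 0 := by
        refine Finset.sum_eq_zero fun T hT => ?_
        rw [Finset.mem_powersetCard] at hT
        have hre : ∑ S ∈ (univ : Finset ι).powerset.filter (fun S => T ⊆ S),
            (-1 : ℂ) ^ S.card * Q.eval (c + ∑ p ∈ S, β p)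
            = ∑ R ∈ ((univ : Finset ι) \ T).powerset,
              (-1 : ℂ) ^ (T ∪ R).card * Q.eval (c + ∑ p ∈ T ∪ R, β p) := by
          refine Finset.sum_nbij' (fun S => S \ T) (fun R => T ∪ R) ?_ ?_ ?_ ?_ ?_
          · intro S hS
            simp only [Finset.mem_filter, Finset.mem_powerset] at *
            exact Finset.sdiff_subset_sdiff hS.1 (le_refl _)
          · intro R hR
            simp only [Finset.mem_filter, Finset.mem_powerset] at *
            exact ⟨Finset.subset_univ _, Finset.subset_union_left⟩
          · intro S hS
            simp only [Finset.mem_filter, Finset.mem_powerset] at hS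
            exact Finset.union_sdiff_of_subset hS.2
          · intro R hR
            simp only [Finset.mem_powerset] at hR
            refine Finset.union_sdiff_cancel_left ?_
            rw [Finset.disjoint_left]
            intro x hxT hxR
            exact ((Finset.mem_sdiff.1 (hR hxR)).2 hxT)
          · intro S hS
            simp only [Finset.mem_filter, Finset.mem_powerset] at hS
            rw [Finset.union_sdiff_of_subset hS.2]
        rw [hre]
        have hdisj : ∀ R ∈ ((univ : Finset ι) \ T).powerset, Disjoint T R := by
          intro R hR
          rw [Finset.mem_powerset] at hR
          rw [Finset.disjoint_left]
          intro x hxT hxR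
          exact (Finset.mem_sdiff.1 (hR hxR)).2 hxT
        calc ∑ R ∈ ((univ : Finset ι) \ T).powerset,
              (-1 : ℂ) ^ (T ∪ R).card * Q.eval (c + ∑ p ∈ T ∪ R, β p)
            = (-1 : ℂ) ^ j * ∑ R ∈ ((univ : Finset ι) \ T).powerset,
              (-1 : ℂ) ^ R.card * Q.eval ((c + ∑ p ∈ T, β p) + ∑ p ∈ R, β p) := by
              rw [Finset.mul_sum]
              refine Finset.sum_congr rfl fun R hR => ?_
              rw [Finset.card_union_of_disjoint (hdisj R hR),
                Finset.sum_union (hdisj R hR), hT.2, pow_add, add_assoc]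
              ring
          _ = 0 := by
              rw [diff_lemma _ Q ?_ β (c + ∑ p ∈ T, β p), mul_zero]
              rw [Finset.card_sdiff_of_subset (Finset.subset_univ T), Finset.card_univ, hT.2]
              exact hQD

lemma profile (d : ℕ) (v : Fin d → ℕ) (γ : Fin d → ℂ) (c : ℂ) (H : ℕ → ℂ → ℂ) :
    ∑ S ∈ (univ : Finset (Σ r : Fin d, Fin (v r))).powerset, H S.card (c + ∑ p ∈ S, γ p.1)
    = ∑ i ∈ Fintype.piFinset (fun r => Finset.range (v r + 1)),
        (∏ r, ((v r).choose (i r) : ℂ)) * H (∑ r, i r) (c + ∑ r, (i r : ℂ) * γ r) := by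
  have step1 : ∑ S ∈ (univ : Finset (Σ r : Fin d, Fin (v r))).powerset,
      H S.card (c + ∑ p ∈ S, γ p.1)
      = ∑ f ∈ Fintype.piFinset (fun r => (univ : Finset (Fin (v r))).powerset),
        H (∑ r, (f r).card) (c + ∑ r, ((f r).card : ℂ) * γ r) := by
    refine Finset.sum_nbij' (fun S => fun r => univ.filter (fun x => (⟨r, x⟩ : Σ r, Fin (v r)) ∈ S))
      (fun f => univ.sigma f) ?_ ?_ ?_ ?_ ?_
    · intro S _
      simp only [Fintype.mem_piFinset, Finset.mem_powerset]
      intro r; exact Finset.subset_univ _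
    · intro f _
      exact Finset.mem_powerset.2 (Finset.subset_univ _)
    · intro S _
      ext p
      obtain ⟨r, x⟩ := p
      simp [Finset.mem_sigma, Finset.mem_filter]
    · intro f _
      funext r
      ext x
      simp [Finset.mem_sigma, Finset.mem_filter]
    · intro S hS
      congr 1
      · conv_lhs => rw [show S = univ.sigma (fun r => univ.filter
            (fun x => (⟨r, x⟩ : Σ r, Fin (v r)) ∈ S)) from by
          ext p; obtain ⟨r, x⟩ := p; simp [Finset.mem_sigma, Finset.mem_filter]]
        rw [Finset.card_sigma]
      · congr 1
        conv_lhs => rw [show S = univ.sigma (fun r => univ.filter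
            (fun x => (⟨r, x⟩ : Σ r, Fin (v r)) ∈ S)) from by
          ext p; obtain ⟨r, x⟩ := p; simp [Finset.mem_sigma, Finset.mem_filter]]
        rw [Finset.sum_sigma]
        refine Finset.sum_congr rfl fun r _ => ?_
        simp [mul_comm]
  rw [step1]
  rw [← Finset.sum_fiberwise_of_maps_to (g := fun f => fun r => (f r).card)
    (t := Fintype.piFinset (fun r => Finset.range (v r + 1))) ?_]
  · refine Finset.sum_congr rfl fun i hi => ?_
    have hfib : (Fintype.piFinset (fun r => (univ : Finset (Fin (v r))).powerset)).filter
        (fun f => (fun r => (f r).card) = i)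
        = Fintype.piFinset (fun r => (univ : Finset (Fin (v r))).powersetCard (i r)) := by
      ext f
      simp only [Finset.mem_filter, Fintype.mem_piFinset, Finset.mem_powerset,
        Finset.mem_powersetCard_univ, funext_iff]
      exact ⟨fun h => h.2, fun h => ⟨fun r => Finset.subset_univ _, h⟩⟩
    rw [hfib]
    have hconst : ∀ f ∈ Fintype.piFinset (fun r => (univ : Finset (Fin (v r))).powersetCard (i r)),
        H (∑ r, (f r).card) (c + ∑ r, ((f r).card : ℂ) * γ r)
        = H (∑ r, i r) (c + ∑ r, (i r : ℂ) * γ r) := by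
      intro f hf
      simp only [Fintype.mem_piFinset, Finset.mem_powersetCard_univ] at hf
      simp only [hf]
    rw [Finset.sum_congr rfl hconst, Finset.sum_const, Fintype.card_piFinset, nsmul_eq_mul]
    congr 1
    push_cast
    refine Finset.prod_congr rfl fun r _ => ?_
    rw [Finset.card_powersetCard, Finset.card_univ, Fintype.card_fin]
  · intro f _
    simp only [Fintype.mem_piFinset, Finset.mem_range]
    intro r
    have := Finset.card_le_univ (f r)
    simp only [Finset.card_univ, Fintype.card_fin] at this
    omega

noncomputable def Qp (k j : ℕ) : Polynomial ℂ :=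
  Polynomial.C (((k - j - 1).factorial : ℂ)⁻¹) *
    ∏ u ∈ Finset.range (k - j - 1), (X - Polynomial.C ((j : ℂ) + 1 + u))

lemma Qp_degree (k j : ℕ) (h : j < k) : (Qp k j).degree < ((k - j : ℕ) : WithBot ℕ) := by
  have h1 : (Qp k j).degree ≤ ((k - j - 1 : ℕ) : WithBot ℕ) := by
    unfold Qp
    refine le_trans (Polynomial.degree_mul_le _ _) ?_
    have h2 : (∏ u ∈ Finset.range (k - j - 1), (X - Polynomial.C ((j : ℂ) + 1 + u))).degree
        = ((k - j - 1 : ℕ) : WithBot ℕ) := by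
      rw [Polynomial.degree_prod]
      rw [Finset.sum_congr rfl (fun (u : ℕ) _ => Polynomial.degree_X_sub_C ((j : ℂ) + 1 + (u : ℂ)))]
      simp
    rw [h2]
    have h3 : (Polynomial.C (((k - j - 1).factorial : ℂ)⁻¹)).degree ≤ 0 :=
      Polynomial.degree_C_le
    calc (Polynomial.C (((k - j - 1).factorial : ℂ)⁻¹)).degree + ((k - j - 1 : ℕ) : WithBot ℕ)
        ≤ 0 + ((k - j - 1 : ℕ) : WithBot ℕ) := add_le_add_left h3 _
      _ = ((k - j - 1 : ℕ) : WithBot ℕ) := zero_add _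
  refine lt_of_le_of_lt h1 ?_
  exact_mod_cast (by omega : k - j - 1 < k - j)

lemma Qp_eval (k j : ℕ) (x : ℂ) :
    (Qp k j).eval x = (((k - j - 1).factorial : ℂ))⁻¹ *
      ∏ u ∈ Finset.range (k - j - 1), (x - ((j : ℂ) + 1 + u)) := by
  simp [Qp, Polynomial.eval_prod]

lemma prod_ident (α : ℂ) : ∀ (p q : ℕ), 1 ≤ p + q →
    (∏ t ∈ Finset.range p, (α - t)) * (∏ t ∈ Finset.range q, (α + t))
    = α * ∏ w ∈ Finset.range (p + q - 1), (α - p + 1 + w) := by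
  intro p
  induction p with
  | zero =>
    intro q hq
    obtain ⟨m, rfl⟩ : ∃ m, q = m + 1 := ⟨q - 1, by omega⟩
    rw [Finset.prod_range_succ']
    simp only [Finset.range_zero, Finset.prod_empty, one_mul, Nat.cast_zero, add_zero,
      Nat.zero_add, Nat.add_sub_cancel]
    rw [mul_comm]
    congr 1
    refine Finset.prod_congr rfl fun t _ => ?_
    push_cast
    ring
  | succ p ih =>
    intro q hq
    by_cases h1 : 1 ≤ p + q
    · obtain ⟨m, hm2⟩ : ∃ m, p + q = m + 1 := ⟨p + q - 1, by omega⟩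
      rw [Finset.prod_range_succ]
      rw [show (∏ t ∈ Finset.range p, (α - t)) * (α - p) * (∏ t ∈ Finset.range q, (α + t))
          = (α - p) * ((∏ t ∈ Finset.range p, (α - t)) * (∏ t ∈ Finset.range q, (α + t)))
          from by ring, ih q h1]
      have hidx : p + 1 + q - 1 = m + 1 := by omega
      have hidx2 : p + q - 1 = m := by omega
      rw [hidx, hidx2, Finset.prod_range_succ']
      have hpr : ∏ w ∈ Finset.range m, (α - (p + 1 : ℕ) + 1 + ((w + 1 : ℕ) : ℂ))
          = ∏ w ∈ Finset.range m, (α - p + 1 + w) := by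
        refine Finset.prod_congr rfl fun w _ => ?_
        push_cast
        ring
      rw [hpr]
      push_cast
      ring
    · have hp : p = 0 := by omega
      have hq0 : q = 0 := by omega
      subst hp; subst hq0
      simp

lemma coeff_eq (αF α : ℂ) (hα : α ≠ 0) (k l j : ℕ) (hjk : j < k) (hjl : j ≤ l) (hlk : l ≤ k) :
    αF / α * gchoose α (k - l) * gchoose (-α) (l - j) / (k.choose l : ℂ)
    = (αF * (j.factorial : ℂ) * ((k - j - 1).factorial : ℂ) / (k.factorial : ℂ))
        * (-1 : ℂ) ^ (l + j) * (l.choose j : ℂ) * (Qp k j).eval (α + l) := by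
  have hneg : ∏ t ∈ Finset.range (l - j), (-α - (t : ℂ))
      = (-1 : ℂ) ^ (l - j) * ∏ t ∈ Finset.range (l - j), (α + t) := by
    have h' : ∀ t ∈ Finset.range (l - j), -α - (t : ℂ) = (-1) * (α + t) := fun t _ => by ring
    rw [Finset.prod_congr rfl h', Finset.prod_mul_distrib, Finset.prod_const,
      Finset.card_range]
  have hpq : (k - l) + (l - j) = k - j := by omega
  have hone : 1 ≤ (k - l) + (l - j) := by omega
  have hprod := prod_ident α (k - l) (l - j) hone
  rw [hpq] at hprod
  have hQ : ∏ u ∈ Finset.range (k - j - 1), ((α + (l : ℂ)) - ((j : ℂ) + 1 + u))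
      = ∏ w ∈ Finset.range (k - j - 1), (α - ((k - l : ℕ) : ℂ) + 1 + w) := by
    rw [← Finset.prod_range_reflect (fun w => α - ((k - l : ℕ) : ℂ) + 1 + w) (k - j - 1)]
    refine Finset.prod_congr rfl fun u hu => ?_
    rw [Finset.mem_range] at hu
    have c1 : ((k - j - 1 - 1 - u : ℕ) : ℂ) = (k : ℂ) - j - 2 - u := by
      have : k - j - 1 - 1 - u = k - (j + 2 + u) := by omega
      rw [this, Nat.cast_sub (by omega)]
      push_cast
      ring
    have c2 : ((k - l : ℕ) : ℂ) = (k : ℂ) - l := by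
      rw [Nat.cast_sub hlk]
    rw [c1, c2]
    ring
  have hsign : (-1 : ℂ) ^ (l + j) = (-1 : ℂ) ^ (l - j) := by
    have : l + j = (l - j) + 2 * j := by omega
    rw [this, pow_add, pow_mul]
    simp
  have f1 : (k.choose l) * l.factorial * (k - l).factorial = k.factorial :=
    Nat.choose_mul_factorial_mul_factorial hlk
  have f2 : (l.choose j) * j.factorial * (l - j).factorial = l.factorial :=
    Nat.choose_mul_factorial_mul_factorial hjl
  have nzf : ∀ m : ℕ, ((m.factorial : ℂ)) ≠ 0 := fun m => by
    exact_mod_cast m.factorial_ne_zero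
  have nzc : ((k.choose l : ℕ) : ℂ) ≠ 0 :=
    Nat.cast_ne_zero.2 (Nat.choose_pos hlk).ne'
  have hkfac : (k.factorial : ℂ) = (k.choose l : ℂ) * (l.choose j : ℂ) * (j.factorial : ℂ)
      * ((l - j).factorial : ℂ) * ((k - l).factorial : ℂ) := by
    rw [← f1, ← f2]
    push_cast
    ring
  have nz1 : (((k - l).factorial : ℕ) : ℂ) ≠ 0 := nzf _
  have nz2 : (((l - j).factorial : ℕ) : ℂ) ≠ 0 := nzf _
  have nz3 : (((k - j - 1).factorial : ℕ) : ℂ) ≠ 0 := nzf _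
  have nz4 : ((k.factorial : ℕ) : ℂ) ≠ 0 := nzf _
  unfold gchoose
  rw [hneg, Qp_eval, hQ, hsign]
  rw [show αF / α * ((∏ i ∈ Finset.range (k - l), (α - (i:ℂ))) / (((k-l).factorial : ℕ) : ℂ)) *
      (((-1:ℂ) ^ (l - j) * ∏ t ∈ Finset.range (l - j), (α + (t:ℂ))) / (((l-j).factorial : ℕ) : ℂ)) /
      ((k.choose l : ℕ) : ℂ)
      = αF * (-1:ℂ) ^ (l - j) *
        (((∏ i ∈ Finset.range (k - l), (α - (i:ℂ))) * ∏ t ∈ Finset.range (l - j), (α + (t:ℂ))) /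
          ((((k-l).factorial : ℕ) : ℂ) * (((l-j).factorial : ℕ) : ℂ) * α * ((k.choose l : ℕ) : ℂ)))
      from by field_simp, hprod]
  field_simp
  rw [hkfac]
  ring

end Auxiliary

noncomputable def Ffun (A B C τ : ℂ) (k n l m : ℕ) : ℂ :=
  ((A * k + B * n + C) / (A * l + B * m + C)) *
    gchoose (A * l + B * m + C) (k - l) * gchoose (τ - (A * l + B * m + C)) l /
      (k.choose l : ℂ)

noncomputable def gfun (A B C τ : ℂ) (k n : ℕ) {d : ℕ} (v i : Fin d → ℕ) : ℂ :=
  Ffun A B C τ k n (∑ r, i r) (∑ r : Fin d, ((r : ℕ) + 1) * i r) *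
    ∏ r, ((v r).choose (i r) : ℂ)

noncomputable def cfun (A B C : ℂ) (k n : ℕ) {d : ℕ} (v : Fin d → ℕ) (j : ℕ)
    (i : Fin d → ℕ) : ℂ :=
  ((A * k + B * n + C) * (j.factorial : ℂ) * ((k - j - 1).factorial : ℂ) / (k.factorial : ℂ))
    * (-1 : ℂ) ^ ((∑ r, i r) + j) * (((∑ r, i r).choose j : ℕ) : ℂ)
    * (Qp k j).eval ((A * (∑ r, i r : ℕ) + B * (∑ r : Fin d, ((r : ℕ) + 1) * i r : ℕ) + C)
        + ((∑ r, i r : ℕ) : ℂ))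
    * ∏ r, ((v r).choose (i r) : ℂ)

lemma step1 (d k n : ℕ) (v : Fin d → ℕ)
    (hs : ∑ r, v r = k) (hw : ∑ r : Fin d, ((r : ℕ) + 1) * v r = n) (A B C τ : ℂ) :
    ∑ l ∈ Finset.range (k + 1), ∑ m ∈ Finset.Icc l n,
      Ffun A B C τ k n l m * (W d m l v : ℂ)
    = ∑ i ∈ Fintype.piFinset (fun r => Finset.range (v r + 1)), gfun A B C τ k n v i := by
  have hW : ∀ l m : ℕ, (W d m l v : ℂ) = ∑ i ∈ parts d m l, ∏ r, ((v r).choose (i r) : ℂ) := by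
    intro l m
    rw [W]
    push_cast
    rfl
  calc ∑ l ∈ Finset.range (k + 1), ∑ m ∈ Finset.Icc l n,
        Ffun A B C τ k n l m * (W d m l v : ℂ)
      = ∑ l ∈ Finset.range (k + 1), ∑ m ∈ Finset.Icc l n, ∑ i ∈ parts d m l,
          gfun A B C τ k n v i := by
        refine Finset.sum_congr rfl fun l _ => Finset.sum_congr rfl fun m _ => ?_
        rw [hW, Finset.mul_sum]
        refine Finset.sum_congr rfl fun i hi => ?_
        rw [parts, Finset.mem_filter] at hi
        rw [gfun, hi.2.1, hi.2.2]
    _ = ∑ p ∈ (Finset.range (k + 1)).sigma (fun l => Finset.Icc l n),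
          ∑ i ∈ parts d p.2 p.1, gfun A B C τ k n v i := Finset.sum_sigma' _ _ _
    _ = ∑ i ∈ ((Finset.range (k + 1)).sigma (fun l => Finset.Icc l n)).biUnion
          (fun p => parts d p.2 p.1), gfun A B C τ k n v i := by
        refine (Finset.sum_biUnion ?_).symm
        intro p hp q hq hpq
        dsimp only [Function.onFun]
        rw [Finset.disjoint_left]
        intro i hip hiq
        rw [parts, Finset.mem_filter] at hip hiq
        exact hpq (Sigma.ext (hip.2.1 ▸ hiq.2.1 ▸ rfl) (heq_of_eq (hip.2.2 ▸ hiq.2.2 ▸ rfl)))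
    _ = ∑ i ∈ Fintype.piFinset (fun r => Finset.range (v r + 1)), gfun A B C τ k n v i := by
        refine (Finset.sum_subset ?_ ?_).symm
        · -- box ⊆ biUnion
          intro i hi
          rw [Fintype.mem_piFinset] at hi
          have hile : ∀ r, i r ≤ v r := fun r => by
            have := hi r; rw [Finset.mem_range] at this; omega
          have hLk : (∑ r, i r) ≤ k := hs ▸ Finset.sum_le_sum fun r _ => hile r
          have hMn : (∑ r : Fin d, ((r : ℕ) + 1) * i r) ≤ n :=
            hw ▸ Finset.sum_le_sum fun r _ => Nat.mul_le_mul_left _ (hile r)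
          have hLM : (∑ r, i r) ≤ ∑ r : Fin d, ((r : ℕ) + 1) * i r :=
            Finset.sum_le_sum fun r _ => Nat.le_mul_of_pos_left _ (Nat.succ_pos _)
          rw [Finset.mem_biUnion]
          refine ⟨⟨∑ r, i r, ∑ r : Fin d, ((r : ℕ) + 1) * i r⟩, ?_, ?_⟩
          · rw [Finset.mem_sigma]
            dsimp only
            rw [Finset.mem_range, Finset.mem_Icc]
            exact ⟨by omega, hLM, hMn⟩
          · rw [parts, Finset.mem_filter]
            refine ⟨?_, rfl, rfl⟩
            rw [Fintype.mem_piFinset]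
            intro r
            dsimp only
            rw [Finset.mem_range]
            have : ((r : ℕ) + 1) * i r ≤ ∑ r : Fin d, ((r : ℕ) + 1) * i r :=
              Finset.single_le_sum (f := fun r : Fin d => ((r : ℕ) + 1) * i r)
                (fun _ _ => Nat.zero_le _) (Finset.mem_univ r)
            have h2 : i r ≤ ((r : ℕ) + 1) * i r := Nat.le_mul_of_pos_left _ (Nat.succ_pos _)
            omega
        · -- outside box: g = 0
          intro i _ hnot
          rw [Fintype.mem_piFinset] at hnot
          push_neg at hnot
          obtain ⟨r, hr⟩ := hnot
          rw [Finset.mem_range] at hr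
          have : ((v r).choose (i r) : ℂ) = 0 := by
            rw [Nat.choose_eq_zero_of_lt (by omega)]
            exact Nat.cast_zero
          rw [gfun, Finset.prod_eq_zero (Finset.mem_univ r) this, mul_zero]

lemma key_vanish (d : ℕ) (v : Fin d → ℕ) (γ : Fin d → ℂ) (c : ℂ) (j : ℕ) (Q : Polynomial ℂ)
    (hdeg : Q.degree < (((∑ r, v r) - j : ℕ) : WithBot ℕ)) :
    ∑ i ∈ Fintype.piFinset (fun r => Finset.range (v r + 1)),
      (∏ r, ((v r).choose (i r) : ℂ)) *
        ((-1 : ℂ) ^ (∑ r, i r) * (((∑ r, i r).choose j : ℕ) : ℂ)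
          * Q.eval (c + ∑ r, (i r : ℂ) * γ r)) = 0 := by
  have hp := profile d v γ c (fun L x => (-1 : ℂ) ^ L * ((L.choose j : ℕ) : ℂ) * Q.eval x)
  rw [← hp]
  have hcard : Fintype.card (Σ r : Fin d, Fin (v r)) = ∑ r, v r := by
    simp [Fintype.card_sigma]
  have hm := master (ι := Σ r : Fin d, Fin (v r)) (fun p => γ p.1) c j Q
    (by rw [hcard]; exact hdeg)
  exact hm

lemma vanish (d k n : ℕ) (v : Fin d → ℕ)
    (hs : ∑ r, v r = k) (A B C : ℂ) (j : ℕ) (hj : j < k) :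
    ∑ i ∈ Fintype.piFinset (fun r => Finset.range (v r + 1)), cfun A B C k n v j i = 0 := by
  set γ : Fin d → ℂ := fun r => A + B * ((r : ℕ) + 1) + 1 with hγ
  have harg : ∀ i : Fin d → ℕ,
      (A * (∑ r, i r : ℕ) + B * (∑ r : Fin d, ((r : ℕ) + 1) * i r : ℕ) + C)
        + ((∑ r, i r : ℕ) : ℂ) = C + ∑ r, (i r : ℂ) * γ r := by
    intro i
    have h1 : ∑ r, (i r : ℂ) * γ r = A * (∑ r, (i r : ℂ))
        + B * (∑ r : Fin d, (((r : ℕ) : ℂ) + 1) * (i r : ℂ)) + (∑ r, (i r : ℂ)) := by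
      rw [Finset.mul_sum, Finset.mul_sum, ← Finset.sum_add_distrib, ← Finset.sum_add_distrib]
      exact Finset.sum_congr rfl fun r _ => by rw [hγ]; ring
    push_cast
    rw [h1]
    ring
  have key := key_vanish d v γ C j (Qp k j) (by rw [hs]; exact Qp_degree k j hj)
  calc ∑ i ∈ Fintype.piFinset (fun r => Finset.range (v r + 1)), cfun A B C k n v j i
      = ((A * k + B * n + C) * (j.factorial : ℂ) * ((k - j - 1).factorial : ℂ)
          / (k.factorial : ℂ)) * (-1 : ℂ) ^ j *
        ∑ i ∈ Fintype.piFinset (fun r => Finset.range (v r + 1)),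
          (∏ r, ((v r).choose (i r) : ℂ)) *
            ((-1 : ℂ) ^ (∑ r, i r) * (((∑ r, i r).choose j : ℕ) : ℂ)
              * (Qp k j).eval (C + ∑ r, (i r : ℂ) * γ r)) := by
        rw [Finset.mul_sum]
        refine Finset.sum_congr rfl fun i _ => ?_
        rw [cfun, harg i, pow_add]
        ring
    _ = 0 := by rw [key, mul_zero]

lemma claim2 (d k n : ℕ) (v : Fin d → ℕ)
    (hs : ∑ r, v r = k) (hw : ∑ r : Fin d, ((r : ℕ) + 1) * v r = n) (A B C τ : ℂ)
    (hα : ∀ l m : ℕ, l ≤ k → m ≤ n → A * l + B * m + C ≠ 0)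
    (i : Fin d → ℕ) (hi : i ∈ Fintype.piFinset (fun r => Finset.range (v r + 1))) :
    gfun A B C τ k n v i = ∑ j ∈ Finset.range k, gchoose τ j * cfun A B C k n v j i
      + gchoose τ k * (if i = v then 1 else 0) := by
  rw [Fintype.mem_piFinset] at hi
  have hile : ∀ r, i r ≤ v r := fun r => by
    have := hi r; rw [Finset.mem_range] at this; omega
  have hl : (∑ r, i r) ≤ k := hs ▸ Finset.sum_le_sum fun r _ => hile r
  have hm : (∑ r : Fin d, ((r : ℕ) + 1) * i r) ≤ n :=
    hw ▸ Finset.sum_le_sum fun r _ => Nat.mul_le_mul_left _ (hile r)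
  by_cases hlk : (∑ r, i r) < k
  · set l := ∑ r, i r with hldef
    set m := ∑ r : Fin d, ((r : ℕ) + 1) * i r with hmdef
    have hαi : A * l + B * m + C ≠ 0 := hα l m hl hm
    have expand : gfun A B C τ k n v i = ∑ j ∈ Finset.range (l + 1),
        gchoose τ j * (((A * k + B * n + C) / (A * l + B * m + C)) *
          gchoose (A * l + B * m + C) (k - l) * gchoose (-(A * l + B * m + C)) (l - j) /
          (k.choose l : ℂ) * ∏ r, ((v r).choose (i r) : ℂ)) := by
      rw [gfun, Ffun, sub_eq_add_neg, gchoose_vandermonde τ (-(A * l + B * m + C)) l]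
      rw [Finset.mul_sum, Finset.sum_div, Finset.sum_mul]
      refine Finset.sum_congr rfl fun j _ => ?_
      ring
    have hcoeff : ∀ j, j < k → j ≤ l →
        ((A * k + B * n + C) / (A * l + B * m + C)) *
          gchoose (A * l + B * m + C) (k - l) * gchoose (-(A * l + B * m + C)) (l - j) /
          (k.choose l : ℂ) * (∏ r, ((v r).choose (i r) : ℂ)) = cfun A B C k n v j i := by
      intro j hjk hjl
      rw [coeff_eq (A * k + B * n + C) (A * l + B * m + C) hαi k l j hjk hjl hl, cfun]
    have hiv : i ≠ v := by
      intro h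
      have : l = k := by rw [hldef, h]; exact hs
      omega
    rw [expand, if_neg hiv, mul_zero, add_zero]
    calc ∑ j ∈ Finset.range (l + 1),
          gchoose τ j * (((A * k + B * n + C) / (A * l + B * m + C)) *
            gchoose (A * l + B * m + C) (k - l) * gchoose (-(A * l + B * m + C)) (l - j) /
            (k.choose l : ℂ) * ∏ r, ((v r).choose (i r) : ℂ))
        = ∑ j ∈ Finset.range (l + 1), gchoose τ j * cfun A B C k n v j i := by
          refine Finset.sum_congr rfl fun j hj => ?_
          rw [Finset.mem_range] at hj
          rw [hcoeff j (by omega) (by omega)]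
      _ = ∑ j ∈ Finset.range k, gchoose τ j * cfun A B C k n v j i := by
          refine Finset.sum_subset (Finset.range_subset_range.2 (by omega)) ?_
          intro j hj hj2
          rw [Finset.mem_range] at hj hj2
          have hz : ((l.choose j : ℕ) : ℂ) = 0 := by
            rw [Nat.choose_eq_zero_of_lt (by omega)]
            exact Nat.cast_zero
          rw [cfun]
          rw [← hldef, hz]
          ring
  · have hiv : i = v := by
      have hle : ∀ r ∈ (univ : Finset (Fin d)), i r ≤ v r := fun r _ => hile r
      have hsum : ∑ r, i r = ∑ r, v r := by
        rw [hs]; omega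
      have := (Finset.sum_eq_sum_iff_of_le hle).1 hsum
      funext r
      exact this r (Finset.mem_univ r)
    subst hiv
    have hLK : (∑ r, i r) = k := by omega
    have hMN : (∑ r : Fin d, ((r : ℕ) + 1) * i r) = n := hw
    have hαF : A * (k : ℕ) + B * (n : ℕ) + C ≠ 0 := hα k n le_rfl le_rfl
    have h3 : (∏ r, ((i r).choose (i r) : ℂ)) = 1 := by
      simp [Nat.choose_self]
    have expand : gfun A B C τ k n i i = ∑ j ∈ Finset.range (k + 1),
        gchoose τ j * (((A * k + B * n + C) / (A * k + B * n + C)) *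
          gchoose (A * k + B * n + C) (k - k) * gchoose (-(A * k + B * n + C)) (k - j) /
          (k.choose k : ℂ) * ∏ r, ((i r).choose (i r) : ℂ)) := by
      rw [gfun, Ffun, hLK, hMN, sub_eq_add_neg,
        gchoose_vandermonde τ (-(A * k + B * n + C)) k]
      rw [Finset.mul_sum, Finset.sum_div, Finset.sum_mul]
      refine Finset.sum_congr rfl fun j _ => ?_
      ring
    rw [expand, Finset.sum_range_succ, if_pos rfl]
    congr 1
    · refine Finset.sum_congr rfl fun j hj => ?_
      rw [Finset.mem_range] at hj
      rw [coeff_eq (A * k + B * n + C) (A * k + B * n + C) hαF k k j hj (by omega) le_rfl,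
        cfun, hLK, hMN]
    · have h1 : k - k = 0 := by omega
      have h2 : (k.choose k : ℂ) = 1 := by rw [Nat.choose_self]; exact Nat.cast_one
      rw [h1, h2, h3, gchoose_zero, gchoose_zero, div_self hαF]
      ring

theorem stmt2 (d k n : ℕ) (hk : 0 < k) (v : Fin d → ℕ)
    (hs : ∑ r, v r = k) (hw : ∑ r : Fin d, ((r : ℕ) + 1) * v r = n)
    (A B C : ℂ)
    (hα : ∀ l m : ℕ, l ≤ k → m ≤ n → A * l + B * m + C ≠ 0)
    (τ : ℂ) :
    ∑ l ∈ Finset.range (k + 1), ∑ m ∈ Finset.Icc l n,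
      ((A * k + B * n + C) / (A * l + B * m + C)) *
        gchoose (A * l + B * m + C) (k - l) * gchoose (τ - (A * l + B * m + C)) l /
          (k.choose l : ℂ) * (W d m l v : ℂ)
      = gchoose τ k := by
  calc ∑ l ∈ Finset.range (k + 1), ∑ m ∈ Finset.Icc l n,
        ((A * k + B * n + C) / (A * l + B * m + C)) *
          gchoose (A * l + B * m + C) (k - l) * gchoose (τ - (A * l + B * m + C)) l /
            (k.choose l : ℂ) * (W d m l v : ℂ)
      = ∑ l ∈ Finset.range (k + 1), ∑ m ∈ Finset.Icc l n,
          Ffun A B C τ k n l m * (W d m l v : ℂ) := rfl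
    _ = ∑ i ∈ Fintype.piFinset (fun r => Finset.range (v r + 1)), gfun A B C τ k n v i :=
        step1 d k n v hs hw A B C τ
    _ = ∑ i ∈ Fintype.piFinset (fun r => Finset.range (v r + 1)),
          (∑ j ∈ Finset.range k, gchoose τ j * cfun A B C k n v j i
            + gchoose τ k * (if i = v then 1 else 0)) :=
        Finset.sum_congr rfl fun i hi => claim2 d k n v hs hw A B C τ hα i hi
    _ = (∑ i ∈ Fintype.piFinset (fun r => Finset.range (v r + 1)),
          ∑ j ∈ Finset.range k, gchoose τ j * cfun A B C k n v j i)
        + ∑ i ∈ Fintype.piFinset (fun r => Finset.range (v r + 1)),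
            gchoose τ k * (if i = v then 1 else 0) := Finset.sum_add_distrib
    _ = gchoose τ k := by
        have hz : (∑ i ∈ Fintype.piFinset (fun r => Finset.range (v r + 1)),
            ∑ j ∈ Finset.range k, gchoose τ j * cfun A B C k n v j i) = 0 := by
          rw [Finset.sum_comm]
          refine Finset.sum_eq_zero fun j hj => ?_
          rw [Finset.mem_range] at hj
          rw [← Finset.mul_sum, vanish d k n v hs A B C j hj, mul_zero]
        have hv : v ∈ Fintype.piFinset (fun r => Finset.range (v r + 1)) := by
          rw [Fintype.mem_piFinset]
          intro r
          rw [Finset.mem_range]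
          omega
        have hone : (∑ i ∈ Fintype.piFinset (fun r => Finset.range (v r + 1)),
            gchoose τ k * (if i = v then 1 else 0)) = gchoose τ k := by
          rw [← Finset.mul_sum, Finset.sum_ite_eq' _ v (fun _ => (1 : ℂ)), if_pos hv, mul_one]
        rw [hz, hone, zero_add]
end

section
/- Hagen–Rothe identity (second form): for complex numbers x, y, z with x + l*z nonzero for 0 <= l <= k, sum over l=0..k of [x/(x+l*z)] * C(x+l*z, l) * C(y+(k-l)*z, k-l) equals C(x+y+k*z, k). -/
open Finset

open Polynomial

noncomputable def A (z : ℂ) : ℕ → ℂ → ℂ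
  | 0, _ => 1
  | (l+1), x => x * (∏ i ∈ Finset.range l, (x + ((l+1 : ℕ) : ℂ) * z - ((i+1 : ℕ) : ℂ)))
      / (((l+1).factorial : ℕ) : ℂ)

-- Pascal for gchoose
lemma pascal (w : ℂ) (m : ℕ) :
    gchoose (w + 1) (m + 1) - gchoose w (m + 1) = gchoose w m := by
  unfold gchoose
  rw [Finset.prod_range_succ' (fun i => w + 1 - (i : ℂ)), Finset.prod_range_succ]
  have h1 : (∏ i ∈ Finset.range m, (w + 1 - ((i : ℕ) + 1 : ℕ))) =
      ∏ i ∈ Finset.range m, (w - (i : ℂ)) := by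
    apply Finset.prod_congr rfl
    intro i _
    push_cast
    ring
  rw [h1]
  have hf : ((m + 1).factorial : ℂ) = (m + 1) * (m.factorial : ℂ) := by
    push_cast [Nat.factorial_succ]; ring
  have hm : (m.factorial : ℂ) ≠ 0 := by
    exact_mod_cast Nat.cast_ne_zero.mpr m.factorial_ne_zero
  have hm1 : ((m:ℂ) + 1) ≠ 0 := by
    have := Nat.cast_add_one_ne_zero (R := ℂ) m
    exact this
  rw [hf]
  field_simp
  ring

lemma A_zero (z x : ℂ) : A z 0 x = 1 := rfl

lemma starA (z x : ℂ) (l : ℕ) :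
    A z (l+1) (x+1) - A z (l+1) x = A z l (x+z) := by
  cases l with
  | zero => simp [A]
  | succ m =>
    show (x+1) * (∏ i ∈ Finset.range (m+1), ((x+1) + ((m+2 : ℕ) : ℂ) * z - ((i+1 : ℕ) : ℂ)))
        / (((m+2).factorial : ℕ) : ℂ)
      - x * (∏ i ∈ Finset.range (m+1), (x + ((m+2 : ℕ) : ℂ) * z - ((i+1 : ℕ) : ℂ)))
        / (((m+2).factorial : ℕ) : ℂ)
      = (x+z) * (∏ i ∈ Finset.range m, ((x+z) + ((m+1 : ℕ) : ℂ) * z - ((i+1 : ℕ) : ℂ)))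
        / (((m+1).factorial : ℕ) : ℂ)
    set c : ℂ := ((m+2 : ℕ) : ℂ) * z with hc
    have h1 : (∏ i ∈ Finset.range (m+1), ((x+1) + c - ((i+1 : ℕ) : ℂ)))
        = (∏ i ∈ Finset.range m, (x + c - ((i+1 : ℕ) : ℂ))) * (x + c) := by
      have : (∏ i ∈ Finset.range (m+1), ((x+1) + c - ((i+1 : ℕ) : ℂ)))
          = ∏ i ∈ Finset.range (m+1), (x + c - ((i : ℕ) : ℂ)) := by
        apply Finset.prod_congr rfl
        intro i _
        push_cast; ring
      rw [this, Finset.prod_range_succ' (fun i => x + c - ((i : ℕ) : ℂ))]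
      norm_num
    have h2 : (∏ i ∈ Finset.range (m+1), (x + c - ((i+1 : ℕ) : ℂ)))
        = (∏ i ∈ Finset.range m, (x + c - ((i+1 : ℕ) : ℂ))) * (x + c - ((m:ℂ)+1)) := by
      rw [Finset.prod_range_succ]
      push_cast; ring
    have h3 : (∏ i ∈ Finset.range m, ((x+z) + ((m+1 : ℕ) : ℂ) * z - ((i+1 : ℕ) : ℂ)))
        = ∏ i ∈ Finset.range m, (x + c - ((i+1 : ℕ) : ℂ)) := by
      apply Finset.prod_congr rfl
      intro i _
      rw [hc]; push_cast; ring
    have hf : (((m+2).factorial : ℕ) : ℂ) = ((m:ℂ)+2) * (((m+1).factorial : ℕ) : ℂ) := by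
      push_cast [Nat.factorial_succ (m+1)]; ring
    have hm : (((m+1).factorial : ℕ) : ℂ) ≠ 0 := by
      exact_mod_cast Nat.cast_ne_zero.mpr (m+1).factorial_ne_zero
    have hm2 : ((m:ℂ) + 2) ≠ 0 := by
      have h : ((m:ℂ) + 2) = ((m+2 : ℕ) : ℂ) := by push_cast; ring
      rw [h]
      exact Nat.cast_ne_zero.mpr (Nat.succ_ne_zero (m+1))
    rw [h1, h2, h3, hf]
    set P := ∏ i ∈ Finset.range m, (x + c - ((i+1 : ℕ) : ℂ)) with hP
    clear_value P
    clear_value c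
    field_simp
    rw [hc]
    push_cast
    ring

noncomputable def pA (z : ℂ) : ℕ → Polynomial ℂ
  | 0 => 1
  | (l+1) => X * (∏ i ∈ Finset.range l,
      (X + C (((l+1 : ℕ) : ℂ) * z - ((i+1 : ℕ) : ℂ)))) * C ((((l+1).factorial : ℕ) : ℂ)⁻¹)

lemma pA_eval (z x : ℂ) (l : ℕ) : (pA z l).eval x = A z l x := by
  cases l with
  | zero => simp [pA, A]
  | succ m =>
    show Polynomial.eval x (X * (∏ i ∈ Finset.range m,
        (X + C (((m+1 : ℕ) : ℂ) * z - ((i+1 : ℕ) : ℂ)))) * C ((((m+1).factorial : ℕ) : ℂ)⁻¹))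
      = x * (∏ i ∈ Finset.range m, (x + ((m+1 : ℕ) : ℂ) * z - ((i+1 : ℕ) : ℂ)))
        / (((m+1).factorial : ℕ) : ℂ)
    rw [eval_mul, eval_mul, eval_X, eval_C, eval_prod, div_eq_mul_inv]
    congr 1
    congr 1
    apply Finset.prod_congr rfl
    intro i _
    simp only [eval_add, eval_X, eval_C]
    ring

noncomputable def pG (c : ℂ) (m : ℕ) : Polynomial ℂ :=
  (∏ i ∈ Finset.range m, (X + C (c - (i : ℂ)))) * C (((m.factorial : ℕ) : ℂ)⁻¹)

lemma pG_eval (c x : ℂ) (m : ℕ) : (pG c m).eval x = gchoose (x + c) m := by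
  unfold pG gchoose
  rw [eval_mul, eval_C, eval_prod, div_eq_mul_inv]
  congr 1
  apply Finset.prod_congr rfl
  intro i _
  simp only [eval_add, eval_X, eval_C]
  ring

lemma A_succ_zero (z : ℂ) (l : ℕ) : A z (l+1) 0 = 0 := by
  show (0:ℂ) * _ / _ = 0
  simp

theorem main : ∀ (k : ℕ) (z x y : ℂ),
    ∑ l ∈ Finset.range (k+1), A z l x * gchoose (y + ((k - l : ℕ) : ℂ) * z) (k - l)
      = gchoose (x + y + (k : ℂ) * z) k := by
  intro k
  induction k with
  | zero =>
    intro z x y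
    simp [A, gchoose]
  | succ k IH =>
    intro z x y
    set F : ℂ → ℂ := fun x =>
      (∑ l ∈ Finset.range (k+1+1),
        A z l x * gchoose (y + ((k+1 - l : ℕ) : ℂ) * z) (k+1-l))
      - gchoose (x + y + ((k+1 : ℕ) : ℂ) * z) (k+1) with hF
    -- Claim 1: F (x+1) = F x for all x
    have claim1 : ∀ x : ℂ, F (x+1) = F x := by
      intro x
      have key : (∑ l ∈ Finset.range (k+1+1),
            A z l (x+1) * gchoose (y + ((k+1 - l : ℕ) : ℂ) * z) (k+1-l))
          - (∑ l ∈ Finset.range (k+1+1),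
            A z l x * gchoose (y + ((k+1 - l : ℕ) : ℂ) * z) (k+1-l))
          = gchoose ((x+z) + y + (k : ℂ) * z) k := by
        rw [← Finset.sum_sub_distrib]
        have : ∀ l ∈ Finset.range (k+1+1),
            A z l (x+1) * gchoose (y + ((k+1 - l : ℕ) : ℂ) * z) (k+1-l)
            - A z l x * gchoose (y + ((k+1 - l : ℕ) : ℂ) * z) (k+1-l)
            = (A z l (x+1) - A z l x) * gchoose (y + ((k+1 - l : ℕ) : ℂ) * z) (k+1-l) := by
          intro l _; ring
        rw [Finset.sum_congr rfl this,
          Finset.sum_range_succ' (fun l =>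
            (A z l (x+1) - A z l x) * gchoose (y + ((k+1 - l : ℕ) : ℂ) * z) (k+1-l)) (k+1)]
        have h0 : (A z 0 (x+1) - A z 0 x) * gchoose (y + ((k+1 - 0 : ℕ) : ℂ) * z) (k+1-0)
            = 0 := by
          rw [A_zero, A_zero]; ring
        rw [h0, add_zero]
        have hterm : ∀ l ∈ Finset.range (k+1),
            (A z (l+1) (x+1) - A z (l+1) x) *
              gchoose (y + ((k+1 - (l+1) : ℕ) : ℂ) * z) (k+1-(l+1))
            = A z l (x+z) * gchoose (y + ((k - l : ℕ) : ℂ) * z) (k-l) := by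
          intro l _
          rw [starA]
          congr 2 <;> simp [Nat.succ_sub_succ]
        rw [Finset.sum_congr rfl hterm, IH z (x+z) y]
      have rdiff : gchoose ((x+1) + y + ((k+1 : ℕ) : ℂ) * z) (k+1)
          - gchoose (x + y + ((k+1 : ℕ) : ℂ) * z) (k+1)
          = gchoose ((x+z) + y + (k : ℂ) * z) k := by
        have hp := pascal (x + y + ((k+1 : ℕ) : ℂ) * z) k
        have e1 : x + y + ((k+1 : ℕ) : ℂ) * z + 1 = (x+1) + y + ((k+1 : ℕ) : ℂ) * z := by
          ring
        have e2 : x + y + ((k+1 : ℕ) : ℂ) * z = (x+z) + y + (k : ℂ) * z := by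
          push_cast; ring
        rw [e1] at hp
        rw [hp, e2]
      simp only [hF]
      rw [sub_eq_sub_iff_sub_eq_sub, key, rdiff]
    -- Claim 2: F 0 = 0
    have claim2 : F 0 = 0 := by
      simp only [hF]
      rw [sub_eq_zero]
      rw [Finset.sum_eq_single 0]
      · rw [A_zero, one_mul]
        congr 1
        · push_cast; ring
      · intro l _ hl
        obtain ⟨m, rfl⟩ := Nat.exists_eq_succ_of_ne_zero hl
        rw [A_succ_zero, zero_mul]
      · intro h
        exact absurd (Finset.mem_range.mpr (Nat.succ_pos _)) h
    -- Claim 3: F n = 0 for all naturals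
    have claim3 : ∀ n : ℕ, F (n : ℂ) = 0 := by
      intro n
      induction n with
      | zero => simpa using claim2
      | succ n ihn =>
        have := claim1 (n : ℂ)
        push_cast
        rw [this, ihn]
    -- Claim 4: F is a polynomial function
    obtain ⟨p, hp⟩ : ∃ p : Polynomial ℂ, ∀ x : ℂ, F x = p.eval x := by
      refine ⟨(∑ l ∈ Finset.range (k+1+1),
        pA z l * C (gchoose (y + ((k+1 - l : ℕ) : ℂ) * z) (k+1-l)))
        - pG (y + ((k+1 : ℕ) : ℂ) * z) (k+1), fun x => ?_⟩
      rw [eval_sub, eval_finset_sum]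
      simp only [eval_mul, eval_C, pA_eval, pG_eval]
      simp only [hF]
      congr 1
      congr 1
      ring
    -- p vanishes at all naturals, hence p = 0
    have hp0 : p = 0 := by
      apply Polynomial.eq_zero_of_infinite_isRoot
      apply Set.infinite_of_injective_forall_mem (f := fun n : ℕ => (n : ℂ))
      case hi => exact Nat.cast_injective
      case hf =>
        intro n
        show p.IsRoot (n : ℂ)
        rw [Polynomial.IsRoot, ← hp n, claim3 n]
    have hFx : F x = 0 := by rw [hp x, hp0, eval_zero]
    have := sub_eq_zero.mp hFx
    exact this

lemma link (x z : ℂ) (l : ℕ) (h : x + (l : ℂ) * z ≠ 0) :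
    x / (x + (l : ℂ) * z) * gchoose (x + (l : ℂ) * z) l = A z l x := by
  cases l with
  | zero =>
    simp only [Nat.cast_zero, zero_mul, add_zero] at h ⊢
    rw [A_zero]
    have : gchoose x 0 = 1 := by simp [gchoose]
    rw [this, mul_one, div_self h]
  | succ m =>
    unfold gchoose
    rw [Finset.prod_range_succ' (fun i => x + ((m+1 : ℕ) : ℂ) * z - (i : ℂ)) m]
    show x / (x + ((m+1 : ℕ) : ℂ) * z) *
        ((∏ i ∈ Finset.range m, (x + ((m+1 : ℕ) : ℂ) * z - ((i+1 : ℕ) : ℂ)))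
          * (x + ((m+1 : ℕ) : ℂ) * z - ((0 : ℕ) : ℂ)) / (((m+1).factorial : ℕ) : ℂ))
      = x * (∏ i ∈ Finset.range m, (x + ((m+1 : ℕ) : ℂ) * z - ((i+1 : ℕ) : ℂ)))
        / (((m+1).factorial : ℕ) : ℂ)
    have hm : (((m+1).factorial : ℕ) : ℂ) ≠ 0 :=
      Nat.cast_ne_zero.mpr (m+1).factorial_ne_zero
    rw [Nat.cast_zero, sub_zero]
    have h' : x + (m:ℂ)*z + z ≠ 0 := by
      intro hh; apply h; push_cast; linear_combination hh
    have h'' : x + ((m:ℂ)+1)*z ≠ 0 := by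
      intro hh; apply h; push_cast; linear_combination hh
    field_simp

theorem stmt7 (k : ℕ) (x y z : ℂ)
    (hx : ∀ l : ℕ, l ≤ k → x + l * z ≠ 0) :
    ∑ l ∈ Finset.range (k + 1),
      (x / (x + l * z)) * gchoose (x + l * z) l *
        gchoose (y + ((k - l : ℕ) : ℂ) * z) (k - l)
      = gchoose (x + y + k * z) k := by
  rw [← main k z x y]
  apply Finset.sum_congr rfl
  intro l hl
  rw [link x z l (hx l (Nat.lt_succ_iff.mp (Finset.mem_range.mp hl)))]
end

section
/- For an integer z with z > k >= 1, 1/C(z,k) equals the sum over l=1..k of (-1)^{l-1} * C(k,l) * l/(z-k+l). -/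
open Finset
open scoped Nat

/-- Recurrence: the alternating sum for n+1 splits via Pascal. -/
lemma sum_rec (n : ℕ) (x : ℚ) :
    ∑ l ∈ range (n+2), (-1:ℚ)^l * ((n+1).choose l : ℚ) / (x + l)
      = (∑ l ∈ range (n+1), (-1:ℚ)^l * (n.choose l : ℚ) / (x + l))
        - ∑ l ∈ range (n+1), (-1:ℚ)^l * (n.choose l : ℚ) / ((x+1) + l) := by
  rw [Finset.sum_range_succ' _ (n+1)]
  have h : ∀ l ∈ range (n+1),
      (-1:ℚ)^(l+1) * ((n+1).choose (l+1) : ℚ) / (x + ((l:ℕ)+1 : ℕ))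
        = (-1:ℚ)^(l+1) * (n.choose (l+1) : ℚ) / (x + ((l:ℕ)+1 : ℕ))
          + (-((-1:ℚ)^l * (n.choose l : ℚ) / ((x+1) + l))) := by
    intro l _
    rw [Nat.choose_succ_succ']
    push_cast
    ring
  rw [Finset.sum_congr rfl h, Finset.sum_add_distrib, Finset.sum_neg_distrib]
  have h2 : (∑ l ∈ range (n+1), (-1:ℚ)^(l+1) * (n.choose (l+1) : ℚ) / (x + ((l:ℕ)+1:ℕ)))
      + 1 / x
      = ∑ l ∈ range (n+1), (-1:ℚ)^l * (n.choose l : ℚ) / (x + l) := by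
    have h3 := Finset.sum_range_succ' (fun l => (-1:ℚ)^l * (n.choose l : ℚ) / (x + (l:ℕ))) (n+1)
    rw [Finset.sum_range_succ] at h3
    simp only [Nat.choose_succ_self, Nat.cast_zero, Nat.cast_ofNat, pow_zero,
      Nat.choose_zero_right, Nat.cast_one, mul_one, one_mul, add_zero,
      mul_zero, zero_div, zero_mul] at h3
    push_cast at h3 ⊢
    linarith [h3]
  push_cast at h2 ⊢
  simp only [Nat.choose_zero_right, Nat.cast_one, pow_zero, one_mul, mul_one, add_zero] at *
  linarith [h2]

/-- Key identity: `∑_{l=0}^n (-1)^l C(n,l)/(x+l) = n! / (x(x+1)⋯(x+n))`. -/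
lemma aux : ∀ (n : ℕ) (x : ℚ), 0 < x →
    (∑ l ∈ range (n+1), (-1:ℚ)^l * (n.choose l : ℚ) / (x + l))
      * (∏ i ∈ range (n+1), (x + i)) = (n ! : ℚ)
  | 0, x, hx => by
    simp [Nat.factorial, div_mul_cancel₀, hx.ne']
  | (n+1), x, hx => by
    have h1 := aux n x hx
    have h2 := aux n (x+1) (by linarith)
    have hp1 : ∏ i ∈ range (n+2), (x + (i:ℚ))
        = (∏ i ∈ range (n+1), (x + (i:ℚ))) * (x + ((n:ℚ)+1)) := by
      rw [Finset.prod_range_succ]; push_cast; ring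
    have hp2 : ∏ i ∈ range (n+2), (x + (i:ℚ))
        = x * ∏ i ∈ range (n+1), ((x+1) + (i:ℚ)) := by
      rw [Finset.prod_range_succ' (fun i => (x + (i:ℚ)))]
      have e0 : x + ((0:ℕ):ℚ) = x := by norm_num
      rw [e0, mul_comm]
      congr 1
      refine Finset.prod_congr rfl fun i _ => ?_
      push_cast
      ring
    have hf : (((n+1)! : ℕ) : ℚ) = ((n:ℚ)+1) * ((n ! : ℕ) : ℚ) := by
      rw [Nat.factorial_succ]; push_cast; ring
    rw [sum_rec n x, sub_mul, hf]
    linear_combination (∑ l ∈ range (n+1), (-1:ℚ)^l * (n.choose l : ℚ) / (x + l)) * hp1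
      - (∑ l ∈ range (n+1), (-1:ℚ)^l * (n.choose l : ℚ) / ((x+1) + l)) * hp2
      + (x + (n:ℚ) + 1) * h1 - x * h2

lemma prodfact : ∀ (j m : ℕ), m ! * (∏ i ∈ range j, (m + 1 + i)) = (m + j)!
  | 0, m => by simp
  | (j+1), m => by
    rw [Finset.prod_range_succ, ← mul_assoc, prodfact j m, ← Nat.add_assoc]
    rw [show m + j + 1 = (m + j) + 1 from rfl, Nat.factorial_succ]
    ring

theorem stmt8 (k z : ℕ) (hk : 1 ≤ k) (hz : k < z) :
    (1 : ℚ) / (z.choose k : ℚ)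
      = ∑ l ∈ Finset.Icc 1 k,
          (-1 : ℚ) ^ (l - 1) * (k.choose l : ℚ) * (l : ℚ) / ((z - k + l : ℕ) : ℚ) := by
  set x : ℚ := ((z - k : ℕ) : ℚ) with hxdef
  have hx1 : 1 ≤ z - k := by omega
  have hx : (0:ℚ) < x := by
    rw [hxdef]; exact_mod_cast Nat.lt_of_lt_of_le Nat.zero_lt_one hx1
  -- the aux identity at x
  have hS := aux k x hx
  -- product identity: ∏_{i=0}^k (x+i) = C(z,k) * x * k!
  have hprodnat : (z - k - 1)! * (∏ i ∈ range (k+1), ((z - k) + i)) = z ! := by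
    have := prodfact (k+1) (z - k - 1)
    have e1 : z - k - 1 + 1 = z - k := by omega
    have e2 : z - k - 1 + (k + 1) = z := by omega
    rw [e1, e2] at this
    convert this using 2
  have hchoosenat : z.choose k * k ! * (z - k)! = z ! :=
    Nat.choose_mul_factorial_mul_factorial hz.le
  have hprod : ∏ i ∈ range (k+1), (x + (i:ℚ)) = (z.choose k : ℚ) * x * (k ! : ℚ) := by
    have hfacpos : ((z - k - 1)! : ℚ) ≠ 0 := by positivity
    have hc : ((z - k : ℕ) : ℚ) * ((z - k - 1)! : ℚ) = ((z - k)! : ℚ) := by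
      have : (z - k) * (z - k - 1)! = (z - k)! := by
        have e : z - k = (z - k - 1) + 1 := by omega
        rw [e, Nat.factorial_succ]
        simp
      exact_mod_cast this
    have hcastprod : ∏ i ∈ range (k+1), (x + (i:ℚ)) = ((∏ i ∈ range (k+1), ((z - k) + i) : ℕ) : ℚ) := by
      rw [Nat.cast_prod]
      exact Finset.prod_congr rfl fun i _ => by push_cast [hxdef]; ring
    rw [hcastprod]
    have : ((z - k - 1)! : ℚ) * ((∏ i ∈ range (k+1), ((z - k) + i) : ℕ) : ℚ) = (z ! : ℚ) := by
      exact_mod_cast hprodnat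
    have hgoal : ((z - k - 1)! : ℚ) * (((∏ i ∈ range (k+1), ((z - k) + i) : ℕ) : ℚ))
        = ((z - k - 1)! : ℚ) * ((z.choose k : ℚ) * x * (k ! : ℚ)) := by
      rw [this, hxdef, ← hchoosenat]
      push_cast
      rw [← hc]
      ring
    exact mul_left_cancel₀ hfacpos hgoal
  -- choose ≠ 0
  have hchoose : (z.choose k : ℚ) ≠ 0 := by
    exact_mod_cast (Nat.choose_pos hz.le).ne'
  -- rewrite denominators: ((z-k+l : ℕ):ℚ) = x + l
  have hden : ∀ l : ℕ, ((z - k + l : ℕ) : ℚ) = x + l := by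
    intro l; push_cast [hxdef]; ring
  -- relate Icc sum to x * S
  have hins : range (k+1) = insert 0 (Finset.Icc 1 k) := by
    ext i; simp [Nat.lt_succ_iff]; omega
  have h0notin : (0:ℕ) ∉ Finset.Icc 1 k := by simp
  have halt : ∑ l ∈ Finset.Icc 1 k, (-1:ℚ)^l * (k.choose l : ℚ) = -1 := by
    have := Int.alternating_sum_range_choose_of_ne (Nat.one_le_iff_ne_zero.mp hk)
    have hq : ∑ m ∈ range (k+1), ((-1:ℚ)^m * (k.choose m : ℚ)) = 0 := by
      exact_mod_cast congrArg (Int.cast : ℤ → ℚ) this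
    rw [hins, Finset.sum_insert h0notin] at hq
    simp at hq
    linarith
  have hsum : x * (∑ l ∈ range (k+1), (-1:ℚ)^l * (k.choose l : ℚ) / (x + l))
      = 1 + ∑ l ∈ Finset.Icc 1 k, (-1:ℚ)^l * (k.choose l : ℚ)
        + ∑ l ∈ Finset.Icc 1 k, (-1:ℚ)^(l-1) * (k.choose l : ℚ) * (l:ℚ) / ((z - k + l : ℕ) : ℚ) := by
    rw [hins, Finset.sum_insert h0notin, mul_add, Finset.mul_sum]
    have hterm : ∀ l ∈ Finset.Icc 1 k,
        x * ((-1:ℚ)^l * (k.choose l : ℚ) / (x + l))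
          = (-1:ℚ)^l * (k.choose l : ℚ)
            + (-1:ℚ)^(l-1) * (k.choose l : ℚ) * (l:ℚ) / ((z - k + l : ℕ) : ℚ) := by
      intro l hl
      rw [hden l]
      have hl1 : 1 ≤ l := (Finset.mem_Icc.mp hl).1
      have hxl : x + (l:ℚ) ≠ 0 := by positivity
      have hpow : (-1:ℚ)^(l-1) = -(-1:ℚ)^l := by
        have e : l = (l - 1) + 1 := by omega
        nth_rewrite 2 [e]
        rw [pow_succ]
        ring
      rw [hpow]
      field_simp
      ring
    rw [Finset.sum_congr rfl hterm, Finset.sum_add_distrib]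
    have : x * ((-1:ℚ)^0 * (k.choose 0 : ℚ) / (x + ((0:ℕ):ℚ))) = 1 := by
      simp [hx.ne']
    rw [this]
    ring
  rw [halt] at hsum
  -- combine: x * S = Icc sum, and x * S = 1 / choose
  have hfinal : x * (∑ l ∈ range (k+1), (-1:ℚ)^l * (k.choose l : ℚ) / (x + l))
      = ∑ l ∈ Finset.Icc 1 k, (-1:ℚ)^(l-1) * (k.choose l : ℚ) * (l:ℚ) / ((z - k + l : ℕ) : ℚ) := by
    rw [hsum]; ring
  rw [← hfinal]
  have hprodne : (∏ i ∈ range (k+1), (x + (i:ℚ))) ≠ 0 := by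
    rw [hprod]
    positivity
  have hfacne : (k ! : ℚ) ≠ 0 := by positivity
  -- from hS : S * P = k!, so S = k!/P, x*S = x*k!/(C*x*k!) = 1/C
  have hSval : (∑ l ∈ range (k+1), (-1:ℚ)^l * (k.choose l : ℚ) / (x + l))
      = (k ! : ℚ) / ((z.choose k : ℚ) * x * (k ! : ℚ)) := by
    rw [← hprod]
    field_simp
    linarith [hS]
  rw [hSval]
  field_simp
end

section
/- For any sequence x = (x_1, x_2, ...) and integers 0 <= l <= k, 0 <= m <= n: C(n,m) * B_{m,l}(x) * B_{n-m,k-l}(x) equals the sum over v in pi(n,k) of [n!/(v_1! v_2! ...)] * W_{m,l}(v) * (x_1/1!)^{v_1} * (x_2/2!)^{v_2} * ..., where W_{m,l}(v) = sum over i in pi(m,l) of C(v_1,i_1)*C(v_2,i_2)*... . -/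
open Finset

/-- The partial Bell polynomial `B_{n,k}(x₁, x₂, …)` evaluated at the sequence `x`. -/
noncomputable def Bell (n k : ℕ) (x : ℕ → ℂ) : ℂ :=
  ∑ i ∈ parts n n k,
    ((n.factorial : ℂ) / ∏ j, ((i j).factorial : ℂ)) *
      ∏ j : Fin n, (x ((j : ℕ) + 1) / (((j : ℕ) + 1).factorial : ℂ)) ^ (i j)

lemma mem_parts {d N K : ℕ} {i : Fin d → ℕ} :
    i ∈ parts d N K ↔ (∑ j, i j) = K ∧ (∑ j : Fin d, ((j:ℕ)+1) * i j) = N := by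
  unfold parts
  simp only [mem_filter, Fintype.mem_piFinset, mem_range]
  constructor
  · tauto
  · rintro ⟨h1, h2⟩
    refine ⟨fun r => ?_, h1, h2⟩
    have h3 : ((r:ℕ)+1) * i r ≤ N :=
      h2 ▸ Finset.single_le_sum (f := fun j : Fin d => ((j:ℕ)+1) * i j)
        (fun _ _ => Nat.zero_le _) (mem_univ r)
    nlinarith [Nat.zero_le (i r)]

lemma parts_zero_tail {d N K : ℕ} {v : Fin d → ℕ} (hv : v ∈ parts d N K)
    {r : Fin d} (hr : N ≤ (r:ℕ)) : v r = 0 := by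
  obtain ⟨-, h2⟩ := mem_parts.mp hv
  have h3 : ((r:ℕ)+1) * v r ≤ N :=
    h2 ▸ Finset.single_le_sum (f := fun j : Fin d => ((j:ℕ)+1) * v j)
      (fun _ _ => Nat.zero_le _) (mem_univ r)
  nlinarith [Nat.zero_le (v r)]

/-- extend a tuple with zeros -/
def ext' (d n : ℕ) (i : Fin d → ℕ) : Fin n → ℕ :=
  fun r => if h : (r : ℕ) < d then i ⟨r, h⟩ else 0

lemma prod_ext {M : Type*} [CommMonoid M] {d n : ℕ} (h : d ≤ n)
    (F : ℕ → ℕ → M) (hF : ∀ r, F r 0 = 1) (i : Fin d → ℕ) :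
    ∏ r : Fin n, F r (ext' d n i r) = ∏ r : Fin d, F r (i r) := by
  have e1 : ∏ r : Fin n, F r (ext' d n i r)
      = ∏ r : Fin n, (fun t => F t (if h : t < d then i ⟨t, h⟩ else 0)) (r : ℕ) := rfl
  have e2 := Fin.prod_univ_eq_prod_range (fun t => F t (if h : t < d then i ⟨t, h⟩ else 0)) n
  rw [e1, e2]
  rw [← Finset.prod_subset (Finset.range_subset_range.mpr h)
    (by intro x hx hx2; simp only [mem_range] at *; rw [dif_neg (by omega)]; exact hF x)]
  rw [← Fin.prod_univ_eq_prod_range (fun t => F t (if h : t < d then i ⟨t, h⟩ else 0)) d]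
  apply Finset.prod_congr rfl
  intro r _
  rw [dif_pos r.isLt]

lemma sum_ext {M : Type*} [AddCommMonoid M] {d n : ℕ} (h : d ≤ n)
    (F : ℕ → ℕ → M) (hF : ∀ r, F r 0 = 0) (i : Fin d → ℕ) :
    ∑ r : Fin n, F r (ext' d n i r) = ∑ r : Fin d, F r (i r) :=
  prod_ext (M := Multiplicative M) h F hF i

lemma ext_restrict {d n K : ℕ} (h : d ≤ n) {v : Fin n → ℕ} (hv : v ∈ parts n d K) :
    ext' d n (fun r => v (Fin.castLE h r)) = v := by
  funext r
  simp only [ext']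
  split
  · rfl
  · exact (parts_zero_tail hv (by omega)).symm

lemma ext_mem {d n K : ℕ} (h : d ≤ n) {i : Fin d → ℕ} (hi : i ∈ parts d d K) :
    ext' d n i ∈ parts n d K := by
  obtain ⟨h1, h2⟩ := mem_parts.mp hi
  rw [mem_parts]
  exact ⟨by rw [sum_ext h (fun _ t => t) (fun _ => rfl)]; exact h1,
    by rw [sum_ext h (fun t u => (t+1)*u) (fun _ => Nat.mul_zero _)]; exact h2⟩

lemma sum_parts_ext {M : Type*} [AddCommMonoid M] {d n : ℕ} (h : d ≤ n)
    (K : ℕ) (f : (Fin n → ℕ) → M) :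
    ∑ v ∈ parts n d K, f v = ∑ i ∈ parts d d K, f (ext' d n i) := by
  refine Finset.sum_nbij' (fun v r => v (Fin.castLE h r)) (ext' d n) ?_ (fun i hi => ext_mem h hi)
    (fun v hv => ext_restrict h hv) ?_ (fun v hv => by rw [ext_restrict h hv])
  · intro v hv
    obtain ⟨h1, h2⟩ := mem_parts.mp hv
    have s1 := sum_ext h (fun _ t => t) (fun _ => rfl) (fun r => v (Fin.castLE h r))
    have s2 := sum_ext h (fun t u => (t+1)*u) (fun _ => Nat.mul_zero _) (fun r => v (Fin.castLE h r))
    rw [ext_restrict h hv] at s1 s2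
    rw [mem_parts]
    exact ⟨by rw [← s1]; exact h1, by rw [← s2]; exact h2⟩
  · intro i hi
    funext r
    simp only [ext', Fin.castLE]
    rw [dif_pos r.isLt]

lemma Bell_eq {d n : ℕ} (h : d ≤ n) (K : ℕ) (x : ℕ → ℂ) :
    Bell d K x = ∑ v ∈ parts n d K,
      ((d.factorial : ℂ) / ∏ j : Fin n, ((v j).factorial : ℂ)) *
        ∏ j : Fin n, (x ((j:ℕ)+1) / (((j:ℕ)+1).factorial : ℂ)) ^ (v j) := by
  rw [Bell, sum_parts_ext h K]
  apply Finset.sum_congr rfl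
  intro i _
  have p1 := prod_ext (M := ℂ) h (fun _ t => (t.factorial : ℂ)) (fun _ => by simp) i
  have p2 := prod_ext (M := ℂ) h (fun r t => (x (r+1) / ((r+1).factorial : ℂ))^t)
    (fun r => pow_zero _) i
  rw [p1, p2]

lemma coeff_id (N M Q Pi Pj PC Xi Xj : ℂ) (hM : M ≠ 0) (hQ : Q ≠ 0)
    (hPi : Pi ≠ 0) (hPj : Pj ≠ 0) (hPC : PC ≠ 0) :
    N / (M * Q) * ((M / Pi * Xi) * (Q / Pj * Xj)) = N / (PC * (Pi * Pj)) * PC * (Xi * Xj) := by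
  field_simp

theorem stmt10 (n k m l : ℕ) (hl : l ≤ k) (hm : m ≤ n) (x : ℕ → ℂ) :
    (n.choose m : ℂ) * Bell m l x * Bell (n - m) (k - l) x
      = ∑ v ∈ parts n n k,
          ((n.factorial : ℂ) / ∏ j, ((v j).factorial : ℂ)) * (W n m l v : ℂ) *
            ∏ j : Fin n, (x ((j : ℕ) + 1) / (((j : ℕ) + 1).factorial : ℂ)) ^ (v j) := by
  have hnm : n - m ≤ n := Nat.sub_le n m
  have rhs_eq : (∑ v ∈ parts n n k,
          ((n.factorial : ℂ) / ∏ j, ((v j).factorial : ℂ)) * (W n m l v : ℂ) *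
            ∏ j : Fin n, (x ((j : ℕ) + 1) / (((j : ℕ) + 1).factorial : ℂ)) ^ (v j))
      = ∑ i ∈ parts n m l, ∑ v ∈ parts n n k,
          ((n.factorial : ℂ) / ∏ j, ((v j).factorial : ℂ)) *
            (∏ r, (((v r).choose (i r) : ℕ) : ℂ)) *
            ∏ j : Fin n, (x ((j : ℕ) + 1) / (((j : ℕ) + 1).factorial : ℂ)) ^ (v j) := by
    rw [Finset.sum_comm]
    apply Finset.sum_congr rfl
    intro v _
    rw [W]
    push_cast
    rw [Finset.mul_sum, Finset.sum_mul]
  rw [rhs_eq, Bell_eq hm l x, Bell_eq hnm (k-l) x, mul_assoc, Finset.sum_mul_sum,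
    Finset.mul_sum]
  apply Finset.sum_congr rfl
  intro i hi
  rw [Finset.mul_sum]
  obtain ⟨hi1, hi2⟩ := mem_parts.mp hi
  have key_bij : ∑ v ∈ parts n n k,
        ((n.factorial : ℂ) / ∏ j, ((v j).factorial : ℂ)) *
          (∏ r, (((v r).choose (i r) : ℕ) : ℂ)) *
          ∏ j : Fin n, (x ((j : ℕ) + 1) / (((j : ℕ) + 1).factorial : ℂ)) ^ (v j)
      = ∑ j ∈ parts n (n-m) (k-l),
        ((n.factorial : ℂ) / ∏ r, (((i r + j r).factorial : ℕ) : ℂ)) *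
          (∏ r, (((i r + j r).choose (i r) : ℕ) : ℂ)) *
          ∏ r : Fin n, (x ((r : ℕ) + 1) / (((r : ℕ) + 1).factorial : ℂ)) ^ (i r + j r) := by
    rw [← Finset.sum_filter_of_ne (p := fun v => ∀ r, i r ≤ v r)
      (by
        intro v _ hne r
        by_contra hlt
        apply hne
        have h0 : (∏ r, (((v r).choose (i r) : ℕ) : ℂ)) = 0 :=
          Finset.prod_eq_zero (mem_univ r)
            (by rw [Nat.choose_eq_zero_of_lt (by omega)]; simp)
        rw [h0]
        ring)]
    refine Finset.sum_nbij' (fun v r => v r - i r) (fun j r => i r + j r) ?_ ?_ ?_ ?_ ?_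
    · intro v hv
      rw [mem_filter] at hv
      obtain ⟨hv, hle⟩ := hv
      obtain ⟨hv1, hv2⟩ := mem_parts.mp hv
      rw [mem_parts]
      beta_reduce
      constructor
      · have e : ∑ r : Fin n, (v r - i r) + ∑ r : Fin n, i r = ∑ r : Fin n, v r := by
          rw [← Finset.sum_add_distrib]
          exact Finset.sum_congr rfl fun r _ => by have := hle r; omega
        omega
      · have e : ∑ r : Fin n, ((r:ℕ)+1) * (v r - i r) + ∑ r : Fin n, ((r:ℕ)+1) * i r
            = ∑ r : Fin n, ((r:ℕ)+1) * v r := by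
          rw [← Finset.sum_add_distrib]
          refine Finset.sum_congr rfl fun r _ => ?_
          have := hle r
          rw [← Nat.mul_add, Nat.sub_add_cancel this]
        omega
    · intro j hj
      obtain ⟨hj1, hj2⟩ := mem_parts.mp hj
      rw [mem_filter]
      refine ⟨?_, fun r => Nat.le_add_right _ _⟩
      rw [mem_parts]
      constructor
      · rw [Finset.sum_add_distrib, hi1, hj1]; omega
      · have : ∑ r : Fin n, ((r:ℕ)+1) * (i r + j r)
            = ∑ r : Fin n, (((r:ℕ)+1) * i r + ((r:ℕ)+1) * j r) :=
          Finset.sum_congr rfl fun r _ => Nat.mul_add _ _ _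
        rw [this, Finset.sum_add_distrib, hi2, hj2]; omega
    · intro v hv
      rw [mem_filter] at hv
      funext r
      beta_reduce
      have := hv.2 r
      omega
    · intro j _
      funext r
      beta_reduce
      omega
    · intro v hv
      rw [mem_filter] at hv
      have hvv : ∀ r, i r + (v r - i r) = v r := fun r => by have := hv.2 r; omega
      simp only [hvv]
  rw [key_bij]
  apply Finset.sum_congr rfl
  intro j hj
  -- per-term identity
  have hXi : ∏ r : Fin n, (x ((r : ℕ) + 1) / (((r : ℕ) + 1).factorial : ℂ)) ^ (i r + j r)
      = (∏ r : Fin n, (x ((r : ℕ) + 1) / (((r : ℕ) + 1).factorial : ℂ)) ^ (i r)) *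
        ∏ r : Fin n, (x ((r : ℕ) + 1) / (((r : ℕ) + 1).factorial : ℂ)) ^ (j r) := by
    rw [← Finset.prod_mul_distrib]
    exact Finset.prod_congr rfl fun r _ => pow_add _ _ _
  have hkey : (∏ r : Fin n, (((i r + j r).choose (i r) : ℕ) : ℂ)) *
        ((∏ r : Fin n, (((i r).factorial : ℕ) : ℂ)) * (∏ r : Fin n, (((j r).factorial : ℕ) : ℂ)))
      = ∏ r : Fin n, (((i r + j r).factorial : ℕ) : ℂ) := by
    rw [← Finset.prod_mul_distrib, ← Finset.prod_mul_distrib]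
    refine Finset.prod_congr rfl fun r _ => ?_
    have h2 : ((i r + j r).choose (i r)) * ((i r).factorial * (j r).factorial)
        = (i r + j r).factorial := by
      rw [← mul_assoc]
      have := Nat.choose_mul_factorial_mul_factorial (Nat.le_add_right (i r) (j r))
      rwa [Nat.add_sub_cancel_left] at this
    exact_mod_cast congrArg (Nat.cast : ℕ → ℂ) h2
  have hchoose : (n.choose m : ℂ) = (n.factorial : ℂ) / ((m.factorial : ℂ) * ((n-m).factorial : ℂ)) :=
    Nat.cast_choose ℂ hm
  have hPi : (∏ r : Fin n, (((i r).factorial : ℕ) : ℂ)) ≠ 0 :=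
    Finset.prod_ne_zero_iff.mpr fun r _ => Nat.cast_ne_zero.mpr (Nat.factorial_ne_zero _)
  have hPj : (∏ r : Fin n, (((j r).factorial : ℕ) : ℂ)) ≠ 0 :=
    Finset.prod_ne_zero_iff.mpr fun r _ => Nat.cast_ne_zero.mpr (Nat.factorial_ne_zero _)
  have hPC : (∏ r : Fin n, (((i r + j r).choose (i r) : ℕ) : ℂ)) ≠ 0 :=
    Finset.prod_ne_zero_iff.mpr fun r _ => Nat.cast_ne_zero.mpr
      (Nat.choose_pos (Nat.le_add_right _ _)).ne'
  rw [hXi, hchoose, ← hkey]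
  exact coeff_id _ _ _ _ _ _ _ _
    (Nat.cast_ne_zero.mpr (Nat.factorial_ne_zero _))
    (Nat.cast_ne_zero.mpr (Nat.factorial_ne_zero _)) hPi hPj hPC
end

section
/- Define Q_{n,b}(lambda, z) = sum over k=1..n of C(lambda + b*k, k-1) * (k-1)! * B_{n,k}(z). For a positive integer lambda and any sequence z: Q_{n,0}(lambda,z) = z_n + sum over i=1..lambda of [i/(lambda+1)] * sum over m=1..n-1 of C(n,m) * z_{n-m} * Q_{m,0}(i-1,z). -/
open Finset

noncomputable def Q (n : ℕ) (b : ℤ) (lam : ℂ) (z : ℕ → ℂ) : ℂ :=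
  ∑ k ∈ Finset.Icc 1 n,
    gchoose (lam + (b : ℂ) * (k : ℂ)) (k - 1) * ((k - 1).factorial : ℂ) * Bell n k z

open PowerSeries

lemma gchoose_nat (a j : ℕ) : gchoose (a : ℂ) j = (a.choose j : ℂ) := by
  unfold gchoose
  rcases le_or_gt j a with h | h
  · have : ∏ i ∈ Finset.range j, ((a : ℂ) - (i : ℂ)) = (a.descFactorial j : ℂ) := by
      rw [Nat.descFactorial_eq_prod_range, Nat.cast_prod]
      refine Finset.prod_congr rfl fun i hi => ?_
      rw [Finset.mem_range] at hi
      rw [Nat.cast_sub (le_trans (Nat.le_of_lt_succ (Nat.lt_succ_of_lt hi)) h)]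
    rw [this, Nat.descFactorial_eq_factorial_mul_choose, Nat.cast_mul]
    rw [mul_comm, mul_div_assoc, div_self (by exact_mod_cast j.factorial_ne_zero), mul_one]
  · rw [Finset.prod_eq_zero (Finset.mem_range.2 h) (by simp), Nat.choose_eq_zero_of_lt h]
    simp



noncomputable def Fz (z : ℕ → ℂ) : PowerSeries ℂ :=
  PowerSeries.mk fun j => if j = 0 then 0 else z j / (j.factorial : ℂ)

lemma coeff_pow_congr (A B : PowerSeries ℂ) (n : ℕ)
    (h : ∀ j ≤ n, coeff j A = coeff j B) (k : ℕ) :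
    ∀ m ≤ n, coeff m (A ^ k) = coeff m (B ^ k) := by
  induction k with
  | zero => intro m _; rfl
  | succ k ih =>
    intro m hm
    rw [pow_succ, pow_succ, coeff_mul, coeff_mul]
    refine Finset.sum_congr rfl fun p hp => ?_
    rw [Finset.HasAntidiagonal.mem_antidiagonal] at hp
    rw [ih p.1 (le_trans (hp ▸ Nat.le_add_right _ _) hm),
      h p.2 (le_trans (hp ▸ Nat.le_add_left _ _) hm)]

lemma monomial_mul_monomial' (a b : ℕ) (c d : ℂ) :
    (PowerSeries.monomial a) c * (PowerSeries.monomial b) d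
      = (PowerSeries.monomial (a + b)) (c * d) := by
  simp only [PowerSeries.monomial, ← Finsupp.single_add, MvPowerSeries.monomial_mul_monomial]

lemma prod_monomial {ι : Type*} (s : Finset ι) (a : ι → ℕ) (c : ι → ℂ) :
    ∏ j ∈ s, (PowerSeries.monomial (a j)) (c j)
      = (PowerSeries.monomial (∑ j ∈ s, a j)) (∏ j ∈ s, c j) := by
  induction s using Finset.cons_induction with
  | empty => simp
  | cons i s hi ih =>
    rw [Finset.prod_cons, Finset.prod_cons, Finset.sum_cons, ih, monomial_mul_monomial']

lemma bell_coeff (z : ℕ → ℂ) (n k : ℕ) :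
    coeff n ((Fz z) ^ k) = ((k.factorial : ℂ) / (n.factorial : ℂ)) * Bell n k z := by
  set c : Fin n → ℂ := fun t => z ((t : ℕ) + 1) / ((((t : ℕ) + 1).factorial : ℂ)) with hc
  set G : PowerSeries ℂ := ∑ j : Fin n, (PowerSeries.monomial ((j : ℕ) + 1)) (c j) with hG
  have hcoe : ∀ j ≤ n, coeff j (Fz z) = coeff j G := by
    intro j hj
    rw [hG, map_sum]
    simp only [coeff_monomial]
    rcases Nat.eq_zero_or_pos j with rfl | hj0
    · simp [Fz]
    · have hjn : j - 1 < n := by omega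
      rw [Finset.sum_eq_single (⟨j - 1, hjn⟩ : Fin n)]
      · simp only [Fz, coeff_mk, hc, Fin.val_mk]
        rw [Nat.sub_add_cancel hj0, if_neg (by omega), if_pos rfl]
      · intro t _ ht
        rw [if_neg]
        intro h
        exact ht (Fin.ext (by simp only [Fin.val_mk]; omega))
      · intro h
        exact absurd (Finset.mem_univ _) h
  have h1 : coeff n ((Fz z) ^ k) = coeff n (G ^ k) :=
    coeff_pow_congr _ _ n hcoe k n le_rfl
  have hpow : ∀ (a e : ℕ) (x : ℂ),
      ((PowerSeries.monomial a) x) ^ e = (PowerSeries.monomial (a * e)) (x ^ e) := by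
    intro a e x
    induction e with
    | zero => simp
    | succ e ih => rw [pow_succ, ih, monomial_mul_monomial', pow_succ, Nat.mul_succ]
  have h2 : coeff n (G ^ k)
      = ∑ l ∈ Finset.piAntidiag Finset.univ k,
          (Nat.multinomial Finset.univ l : ℂ) *
            (if (∑ t : Fin n, ((t : ℕ) + 1) * l t) = n then ∏ t : Fin n, c t ^ l t else 0) := by
    rw [hG, Finset.sum_pow_eq_sum_piAntidiag, map_sum]
    refine Finset.sum_congr rfl fun l hl => ?_
    have : ∏ t : Fin n, ((PowerSeries.monomial ((t : ℕ) + 1)) (c t)) ^ (l t)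
        = (PowerSeries.monomial (∑ t : Fin n, ((t : ℕ) + 1) * l t)) (∏ t : Fin n, c t ^ l t) := by
      rw [← prod_monomial]
      exact Finset.prod_congr rfl fun t _ => hpow _ _ _
    rw [show ((Nat.multinomial Finset.univ l : ℕ) : PowerSeries ℂ)
        = PowerSeries.C ((Nat.multinomial Finset.univ l : ℕ) : ℂ) from (map_natCast C _).symm]
    rw [this, coeff_C_mul, coeff_monomial]
    congr 1
    simp [eq_comm]
  have hset : (Finset.piAntidiag (Finset.univ : Finset (Fin n)) k).filter
      (fun l => (∑ t : Fin n, ((t : ℕ) + 1) * l t) = n) = parts n n k := by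
    ext l
    simp only [Finset.mem_filter, Finset.mem_piAntidiag, parts, Fintype.mem_piFinset,
      Finset.mem_range]
    constructor
    · rintro ⟨⟨hsum, -⟩, hw⟩
      refine ⟨fun j => ?_, hsum, hw⟩
      have h1 : ((j : ℕ) + 1) * l j ≤ ∑ t : Fin n, ((t : ℕ) + 1) * l t :=
        Finset.single_le_sum (f := fun t : Fin n => ((t : ℕ) + 1) * l t)
          (fun t _ => Nat.zero_le _) (Finset.mem_univ j)
      rw [hw] at h1
      have : l j ≤ ((j : ℕ) + 1) * l j := Nat.le_mul_of_pos_left _ (Nat.succ_pos _)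
      omega
    · rintro ⟨-, hsum, hw⟩
      exact ⟨⟨hsum, fun i _ => Finset.mem_univ i⟩, hw⟩
  rw [h1, h2]
  simp_rw [mul_ite, mul_zero]
  rw [← Finset.sum_filter, hset, Bell, Finset.mul_sum]
  refine Finset.sum_congr rfl fun l hl => ?_
  have hsum : (∑ j, l j) = k := by
    simp only [parts, Finset.mem_filter] at hl
    exact hl.2.1
  rw [← mul_assoc]
  congr 1
  have hspec := Nat.multinomial_spec (Finset.univ : Finset (Fin n)) l
  rw [hsum] at hspec
  have key : (∏ j, ((l j).factorial : ℂ)) * (Nat.multinomial Finset.univ l : ℂ)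
      = (k.factorial : ℂ) := by exact_mod_cast congrArg (Nat.cast (R := ℂ)) hspec
  have hfact : (∏ j, ((l j).factorial : ℂ)) ≠ 0 :=
    Finset.prod_ne_zero_iff.2 fun j _ => by exact_mod_cast (l j).factorial_ne_zero
  have hn0 : ((n.factorial : ℕ) : ℂ) ≠ 0 := by exact_mod_cast n.factorial_ne_zero
  field_simp
  linear_combination key

lemma bell_eq_zero (z : ℕ → ℂ) (m k : ℕ) (h : m < k) : Bell m k z = 0 := by
  have : parts m m k = ∅ := by
    rw [Finset.eq_empty_iff_forall_notMem]
    intro l hl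
    simp only [parts, Finset.mem_filter] at hl
    obtain ⟨-, h1, h2⟩ := hl
    have : (∑ j : Fin m, l j) ≤ ∑ j : Fin m, ((j : ℕ) + 1) * l j :=
      Finset.sum_le_sum fun j _ => Nat.le_mul_of_pos_left _ (Nat.succ_pos _)
    omega
  rw [Bell, this, Finset.sum_empty]

lemma bell_one (z : ℕ → ℂ) (n : ℕ) (hn : 1 ≤ n) : Bell n 1 z = z n := by
  have h := bell_coeff z n 1
  rw [pow_one, Fz, coeff_mk, if_neg (by omega)] at h
  have hn0 : (n.factorial : ℂ) ≠ 0 := by exact_mod_cast n.factorial_ne_zero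
  rw [Nat.factorial_one, Nat.cast_one, div_mul_eq_mul_div, one_mul] at h
  field_simp at h
  exact h.symm

lemma conv_lemma (z : ℕ → ℂ) (n k : ℕ) (hn : 1 ≤ n) (hk : 1 ≤ k) :
    ∑ m ∈ Finset.Icc 1 (n - 1), (n.choose m : ℂ) * z (n - m) * Bell m k z
      = ((k : ℂ) + 1) * Bell n (k + 1) z := by
  have h := bell_coeff z n (k + 1)
  rw [pow_succ, coeff_mul, Finset.Nat.sum_antidiagonal_eq_sum_range_succ_mk] at h
  have hsub : Finset.Icc 1 (n - 1) ⊆ Finset.range (n + 1) := by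
    intro m hm; rw [Finset.mem_Icc] at hm; rw [Finset.mem_range]; omega
  have hzero : ∀ m ∈ Finset.range (n + 1), m ∉ Finset.Icc 1 (n - 1) →
      coeff m ((Fz z) ^ k) * coeff (n - m) (Fz z) = 0 := by
    intro m hm hm'
    rw [Finset.mem_range] at hm
    rw [Finset.mem_Icc] at hm'
    rcases Nat.eq_zero_or_pos m with rfl | hm0
    · rw [bell_coeff, bell_eq_zero z 0 k hk]
      simp
    · have : m = n := by omega
      subst this
      rw [Nat.sub_self, Fz, coeff_mk, if_pos rfl, mul_zero]
  rw [← Finset.sum_subset hsub hzero] at h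
  have e1 : ∀ m ∈ Finset.Icc 1 (n - 1),
      coeff m ((Fz z) ^ k) * coeff (n - m) (Fz z)
        = ((k.factorial : ℂ) / (m.factorial : ℂ)) * Bell m k z
            * (z (n - m) / (((n - m).factorial : ℂ))) := by
    intro m hm
    rw [Finset.mem_Icc] at hm
    rw [bell_coeff, Fz, coeff_mk, if_neg (by omega)]
  rw [Finset.sum_congr rfl e1] at h
  have hn0 : (n.factorial : ℂ) ≠ 0 := by exact_mod_cast n.factorial_ne_zero
  have hk0 : (k.factorial : ℂ) ≠ 0 := by exact_mod_cast k.factorial_ne_zero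
  have main : ∑ m ∈ Finset.Icc 1 (n - 1), (n.choose m : ℂ) * z (n - m) * Bell m k z
      = ((n.factorial : ℂ) / (k.factorial : ℂ)) *
          ∑ m ∈ Finset.Icc 1 (n - 1),
            ((k.factorial : ℂ) / (m.factorial : ℂ)) * Bell m k z
              * (z (n - m) / (((n - m).factorial : ℂ))) := by
    rw [Finset.mul_sum]
    refine Finset.sum_congr rfl fun m hm => ?_
    rw [Finset.mem_Icc] at hm
    rw [Nat.cast_choose ℂ (by omega : m ≤ n)]
    have h1 : (m.factorial : ℂ) ≠ 0 := by exact_mod_cast m.factorial_ne_zero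
    have h2 : ((n - m).factorial : ℂ) ≠ 0 := by exact_mod_cast (n - m).factorial_ne_zero
    field_simp
  rw [main, h, Nat.factorial_succ]
  push_cast
  field_simp


noncomputable def R (z : ℕ → ℂ) (n i : ℕ) : ℂ :=
  ∑ k ∈ Finset.Icc 1 n, (i.choose k : ℂ) * (k.factorial : ℂ) * Bell n k z

lemma R_zero (z : ℕ → ℂ) (n : ℕ) : R z n 0 = 0 := by
  rw [R]
  refine Finset.sum_eq_zero fun k hk => ?_
  rw [Finset.mem_Icc] at hk
  rw [Nat.choose_eq_zero_of_lt (by omega), Nat.cast_zero, zero_mul, zero_mul]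

lemma R_succ (z : ℕ → ℂ) (n i : ℕ) (hn : 1 ≤ n) :
    R z n (i + 1) = R z n i + z n +
      ∑ m ∈ Finset.Icc 1 (n - 1), (n.choose m : ℂ) * z (n - m) * R z m i := by
  have key : ∑ m ∈ Finset.Icc 1 (n - 1), (n.choose m : ℂ) * z (n - m) * R z m i
      = ∑ k ∈ Finset.Icc 2 n, (i.choose (k - 1) : ℂ) * (k.factorial : ℂ) * Bell n k z := by
    have e1 : ∀ m ∈ Finset.Icc 1 (n - 1), (n.choose m : ℂ) * z (n - m) * R z m i
        = ∑ k ∈ Finset.Icc 1 (n - 1),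
            (i.choose k : ℂ) * (k.factorial : ℂ) *
              ((n.choose m : ℂ) * z (n - m) * Bell m k z) := by
      intro m hm
      rw [Finset.mem_Icc] at hm
      rw [R, Finset.mul_sum]
      rw [← Finset.sum_subset (Finset.Icc_subset_Icc_right (by omega : m ≤ n - 1))]
      · exact Finset.sum_congr rfl fun k hk => by ring
      · intro k hk hk'
        rw [Finset.mem_Icc] at hk hk'
        rw [bell_eq_zero z m k (by omega)]
        ring
    rw [Finset.sum_congr rfl e1, Finset.sum_comm]
    have e2 : ∀ k ∈ Finset.Icc 1 (n - 1),
        ∑ m ∈ Finset.Icc 1 (n - 1),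
            (i.choose k : ℂ) * (k.factorial : ℂ) *
              ((n.choose m : ℂ) * z (n - m) * Bell m k z)
          = (i.choose k : ℂ) * (k.factorial : ℂ) * (((k : ℂ) + 1) * Bell n (k + 1) z) := by
      intro k hk
      rw [Finset.mem_Icc] at hk
      rw [← Finset.mul_sum, conv_lemma z n k hn hk.1]
    rw [Finset.sum_congr rfl e2]
    have : Finset.Icc 2 n = Finset.map (addRightEmbedding 1) (Finset.Icc 1 (n - 1)) := by
      rw [Finset.map_add_right_Icc]
      congr 1
      omega
    rw [this, Finset.sum_map]
    refine Finset.sum_congr rfl fun k hk => ?_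
    rw [Finset.mem_Icc] at hk
    simp only [addRightEmbedding_apply, Nat.add_sub_cancel]
    rw [Nat.factorial_succ]
    push_cast
    ring
  rw [key, R, R]
  have hsplit : Finset.Icc 1 n = insert 1 (Finset.Icc 2 n) := by
    ext a
    simp only [Finset.mem_Icc, Finset.mem_insert]
    omega
  have h1 : (1 : ℕ) ∉ Finset.Icc 2 n := by simp
  rw [hsplit, Finset.sum_insert h1, Finset.sum_insert h1]
  have hb1 : Bell n 1 z = z n := bell_one z n hn
  have hch : ∀ k, 2 ≤ k → ((i + 1).choose k : ℂ) = (i.choose k : ℂ) + (i.choose (k - 1) : ℂ) := by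
    intro k hk
    obtain ⟨k', rfl⟩ : ∃ k', k = k' + 1 := ⟨k - 1, by omega⟩
    rw [Nat.choose_succ_succ, Nat.add_sub_cancel]
    push_cast
    ring
  have esum : ∑ k ∈ Finset.Icc 2 n, ((i + 1).choose k : ℂ) * (k.factorial : ℂ) * Bell n k z
      = (∑ k ∈ Finset.Icc 2 n, (i.choose k : ℂ) * (k.factorial : ℂ) * Bell n k z)
        + ∑ k ∈ Finset.Icc 2 n, (i.choose (k - 1) : ℂ) * (k.factorial : ℂ) * Bell n k z := by
    rw [← Finset.sum_add_distrib]
    refine Finset.sum_congr rfl fun k hk => ?_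
    rw [Finset.mem_Icc] at hk
    rw [hch k hk.1]
    ring
  rw [esum, hb1]
  simp only [Nat.choose_one_right, Nat.factorial_one, Nat.cast_one]
  push_cast
  ring

lemma R_telescope (z : ℕ → ℂ) (n : ℕ) (hn : 1 ≤ n) (lam : ℕ) :
    R z n (lam + 1) = ((lam : ℂ) + 1) * z n +
      ∑ i ∈ Finset.Icc 1 lam,
        ∑ m ∈ Finset.Icc 1 (n - 1), (n.choose m : ℂ) * z (n - m) * R z m i := by
  induction lam with
  | zero =>
    rw [R_succ z n 0 hn, R_zero]
    have : ∑ m ∈ Finset.Icc 1 (n - 1), (n.choose m : ℂ) * z (n - m) * R z m 0 = 0 :=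
      Finset.sum_eq_zero fun m _ => by rw [R_zero, mul_zero]
    simp [this]
  | succ lam ih =>
    rw [R_succ z n (lam + 1) hn, ih,
      Finset.sum_Icc_succ_top (by omega : 1 ≤ lam + 1)]
    push_cast
    ring

lemma Q_R (z : ℕ → ℂ) (m i : ℕ) (hi : 1 ≤ i) :
    (i : ℂ) * Q m 0 ((i : ℂ) - 1) z = R z m i := by
  rw [Q, R, Finset.mul_sum]
  refine Finset.sum_congr rfl fun k hk => ?_
  rw [Finset.mem_Icc] at hk
  have hcast : (i : ℂ) - 1 + ((0 : ℤ) : ℂ) * (k : ℂ) = (((i - 1 : ℕ) : ℕ) : ℂ) := by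
    push_cast [Nat.cast_sub hi]
    ring
  rw [hcast, gchoose_nat]
  have hnat : i * (i - 1).choose (k - 1) = i.choose k * k := by
    obtain ⟨i', rfl⟩ : ∃ i', i = i' + 1 := ⟨i - 1, by omega⟩
    obtain ⟨k', rfl⟩ : ∃ k', k = k' + 1 := ⟨k - 1, by omega⟩
    simp only [Nat.add_sub_cancel]
    exact Nat.add_one_mul_choose_eq i' k'
  have hfac : (k : ℂ) * ((k - 1).factorial : ℂ) = (k.factorial : ℂ) := by
    obtain ⟨k', rfl⟩ : ∃ k', k = k' + 1 := ⟨k - 1, by omega⟩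
    rw [Nat.add_sub_cancel, Nat.factorial_succ]
    push_cast
    ring
  have : (i : ℂ) * ((i - 1).choose (k - 1) : ℂ) = (i.choose k : ℂ) * (k : ℂ) := by
    exact_mod_cast congrArg (Nat.cast (R := ℂ)) hnat
  calc (i : ℂ) * (((i - 1).choose (k - 1) : ℂ) * ((k - 1).factorial : ℂ) * Bell m k z)
      = ((i : ℂ) * ((i - 1).choose (k - 1) : ℂ)) * ((k - 1).factorial : ℂ) * Bell m k z := by
        ring
    _ = (i.choose k : ℂ) * ((k : ℂ) * ((k - 1).factorial : ℂ)) * Bell m k z := by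
        rw [this]; ring
    _ = (i.choose k : ℂ) * (k.factorial : ℂ) * Bell m k z := by rw [hfac]

theorem stmt16 (n : ℕ) (hn : 1 ≤ n) (lam : ℕ) (hlam : 0 < lam) (z : ℕ → ℂ) :
    Q n 0 (lam : ℂ) z
      = z n + ∑ i ∈ Finset.Icc 1 lam,
          ((i : ℂ) / ((lam : ℂ) + 1)) *
            ∑ m ∈ Finset.Icc 1 (n - 1),
              (n.choose m : ℂ) * z (n - m) * Q m 0 ((i : ℂ) - 1) z := by
  have hl0 : ((lam : ℂ) + 1) ≠ 0 := Nat.cast_add_one_ne_zero lam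
  apply mul_left_cancel₀ hl0
  have hL : ((lam : ℂ) + 1) * Q n 0 (lam : ℂ) z = R z n (lam + 1) := by
    have := Q_R z n (lam + 1) (by omega)
    push_cast at this ⊢
    convert this using 3 <;> push_cast <;> ring
  rw [hL, R_telescope z n hn lam, mul_add, Finset.mul_sum]
  congr 1
  refine Finset.sum_congr rfl fun i hi => ?_
  rw [Finset.mem_Icc] at hi
  have e : ∀ S : ℂ, ((lam : ℂ) + 1) * ((i : ℂ) / ((lam : ℂ) + 1) * S) = (i : ℂ) * S := by
    intro S
    field_simp
  rw [e, Finset.mul_sum]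
  refine Finset.sum_congr rfl fun m hm => ?_
  rw [← Q_R z m i hi.1]
  ring
end

section
/- For integers 0 <= r, complex lambda_1, lambda_2, integers b_1, b_2, positive integers n_1, n_2, and any sequence z: Q_{n_1,b_1}(lambda_1,z) * Q_{n_2,b_2}(lambda_2,z) equals the double sum over k=2..n_1+n_2 and l=1..n_2 of k! * C(lambda_1 + b_1*(k-l) + 1, k-l) * C(lambda_2 + b_2*l + 1, l) / [(lambda_1 + b_1*(k-l) + 1)*(lambda_2 + b_2*l + 1)*C(k,l)] * B_{n_1,k-l}(z) * B_{n_2,l}(z). -/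
open Finset

lemma Bell_eq_zero_of_lt {n k : ℕ} (h : n < k) (z : ℕ → ℂ) : Bell n k z = 0 := by
  unfold Bell
  apply Finset.sum_eq_zero
  intro i hi
  exfalso
  simp only [parts, Finset.mem_filter] at hi
  obtain ⟨-, hsum, hwsum⟩ := hi
  have : (∑ j : Fin n, i j) ≤ ∑ j : Fin n, ((j : ℕ) + 1) * i j :=
    Finset.sum_le_sum fun j _ => Nat.le_mul_of_pos_left _ (Nat.succ_pos _)
  omega

lemma Bell_zero_eq_zero {n : ℕ} (h : 1 ≤ n) (z : ℕ → ℂ) : Bell n 0 z = 0 := by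
  unfold Bell
  apply Finset.sum_eq_zero
  intro i hi
  exfalso
  simp only [parts, Finset.mem_filter] at hi
  obtain ⟨-, hsum, hwsum⟩ := hi
  rw [Finset.sum_eq_zero_iff] at hsum
  rw [Finset.sum_eq_zero (fun j hj => by rw [hsum j hj, mul_zero])] at hwsum
  omega

lemma gchoose_succ (x : ℂ) (j : ℕ) :
    gchoose (x + 1) (j + 1) * (((j + 1).factorial : ℕ) : ℂ) = (x + 1) * (gchoose x j * (j.factorial : ℂ)) := by
  unfold gchoose
  have h1 : ∏ i ∈ Finset.range (j + 1), (x + 1 - (i : ℂ))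
      = (∏ i ∈ Finset.range j, (x - (i : ℂ))) * (x + 1) := by
    rw [Finset.prod_range_succ']
    push_cast
    ring_nf
  rw [h1]
  have hj : (j.factorial : ℂ) ≠ 0 := Nat.cast_ne_zero.2 j.factorial_ne_zero
  have hj1 : (((j+1).factorial : ℕ) : ℂ) ≠ 0 := Nat.cast_ne_zero.2 (j+1).factorial_ne_zero
  field_simp

lemma coeff_eq_s19 (x y : ℂ) (a b : ℕ) (hx : x + 1 ≠ 0) (hy : y + 1 ≠ 0) :
    gchoose x a * (a.factorial : ℂ) * (gchoose y b * (b.factorial : ℂ)) =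
      (((a + 1) + (b + 1)).factorial : ℂ) * gchoose (x + 1) (a + 1) * gchoose (y + 1) (b + 1) /
        ((x + 1) * (y + 1) * ((((a + 1) + (b + 1)).choose (b + 1)) : ℂ)) := by
  have hA := gchoose_succ x a
  have hB := gchoose_succ y b
  have hfac : (((a+1)+(b+1)).choose (b+1)) * (b+1).factorial * (((a+1)+(b+1)) - (b+1)).factorial
      = ((a+1)+(b+1)).factorial := Nat.choose_mul_factorial_mul_factorial (by omega)
  have hsub : ((a+1)+(b+1)) - (b+1) = a + 1 := by omega
  rw [hsub] at hfac
  have hc : ((((a+1)+(b+1)).choose (b+1)) : ℂ) ≠ 0 :=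
    Nat.cast_ne_zero.2 (Nat.choose_pos (by omega)).ne'
  have hfa : ((a+1).factorial : ℂ) ≠ 0 := Nat.cast_ne_zero.2 (a+1).factorial_ne_zero
  have hfb : ((b+1).factorial : ℂ) ≠ 0 := Nat.cast_ne_zero.2 (b+1).factorial_ne_zero
  have hfacC : ((((a+1)+(b+1)).choose (b+1)) : ℂ) * ((b+1).factorial : ℂ) * ((a+1).factorial : ℂ)
      = (((a+1)+(b+1)).factorial : ℂ) := by exact_mod_cast congrArg (Nat.cast : ℕ → ℂ) hfac
  have e1 : gchoose x a * (a.factorial : ℂ) = gchoose (x+1) (a+1) * (((a+1).factorial : ℕ) : ℂ) / (x+1) := by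
    field_simp [hA]
    rw [hA]; ring
  have e2 : gchoose y b * (b.factorial : ℂ) = gchoose (y+1) (b+1) * (((b+1).factorial : ℕ) : ℂ) / (y+1) := by
    field_simp [hB]
    rw [hB]; ring
  rw [e1, e2, ← hfacC]
  field_simp

theorem stmt19 (n1 n2 : ℕ) (hn1 : 1 ≤ n1) (hn2 : 1 ≤ n2) (b1 b2 : ℤ)
    (lam1 lam2 : ℂ) (z : ℕ → ℂ)
    (h1 : ∀ j : ℕ, j ≤ n1 + n2 → lam1 + (b1 : ℂ) * (j : ℂ) + 1 ≠ 0)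
    (h2 : ∀ j : ℕ, j ≤ n1 + n2 → lam2 + (b2 : ℂ) * (j : ℂ) + 1 ≠ 0) :
    Q n1 b1 lam1 z * Q n2 b2 lam2 z
      = ∑ k ∈ Finset.Icc 2 (n1 + n2), ∑ l ∈ Finset.Icc 1 n2,
          (k.factorial : ℂ) * gchoose (lam1 + (b1 : ℂ) * ((k - l : ℕ) : ℂ) + 1) (k - l) *
            gchoose (lam2 + (b2 : ℂ) * (l : ℂ) + 1) l /
              ((lam1 + (b1 : ℂ) * ((k - l : ℕ) : ℂ) + 1) *
                (lam2 + (b2 : ℂ) * (l : ℂ) + 1) * (k.choose l : ℂ)) *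
            Bell n1 (k - l) z * Bell n2 l z := by
  unfold Q
  rw [Finset.sum_mul_sum, ← Finset.sum_product', ← Finset.sum_product']
  set g : ℕ × ℕ → ℂ := fun p =>
      ((p.1).factorial : ℂ) * gchoose (lam1 + (b1 : ℂ) * ((p.1 - p.2 : ℕ) : ℂ) + 1) (p.1 - p.2) *
        gchoose (lam2 + (b2 : ℂ) * ((p.2 : ℕ) : ℂ) + 1) p.2 /
          ((lam1 + (b1 : ℂ) * ((p.1 - p.2 : ℕ) : ℂ) + 1) *
            (lam2 + (b2 : ℂ) * ((p.2 : ℕ) : ℂ) + 1) * ((p.1).choose p.2 : ℂ)) *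
        Bell n1 (p.1 - p.2) z * Bell n2 p.2 z with hg
  apply Finset.sum_of_injOn (fun p => (p.1 + p.2, p.2))
  · intro p hp q hq h
    simp only [Prod.mk.injEq] at h
    exact Prod.ext (by omega) h.2
  · intro p hp
    simp only [Finset.coe_product, Set.mem_prod, Finset.mem_coe, Finset.mem_Icc] at hp ⊢
    omega
  · intro q hq hq'
    simp only [Finset.mem_product, Finset.mem_Icc] at hq
    have hz : Bell n1 (q.1 - q.2) z = 0 := by
      rcases Nat.lt_or_ge n1 (q.1 - q.2) with h | h
      · exact Bell_eq_zero_of_lt h z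
      · rcases Nat.eq_zero_or_pos (q.1 - q.2) with h0 | h0
        · rw [h0]; exact Bell_zero_eq_zero hn1 z
        · exfalso
          apply hq'
          refine ⟨(q.1 - q.2, q.2), ?_, ?_⟩
          · simp only [Finset.coe_product, Set.mem_prod, Finset.mem_coe, Finset.mem_Icc]
            omega
          · ext <;> simp <;> omega
    rw [hz]
    simp
  · intro p hp
    obtain ⟨k1, l⟩ := p
    simp only [Finset.mem_product, Finset.mem_Icc] at hp
    obtain ⟨⟨hp1, hp1'⟩, hp2, hp2'⟩ := hp
    obtain ⟨a, rfl⟩ : ∃ a, k1 = a + 1 := ⟨k1 - 1, by omega⟩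
    obtain ⟨b, rfl⟩ : ∃ b, l = b + 1 := ⟨l - 1, by omega⟩
    simp only [Nat.add_sub_cancel, Nat.succ_sub_one]
    have hx : lam1 + (b1 : ℂ) * ((a + 1 : ℕ) : ℂ) + 1 ≠ 0 := h1 (a + 1) (by omega)
    have hy : lam2 + (b2 : ℂ) * ((b + 1 : ℕ) : ℂ) + 1 ≠ 0 := h2 (b + 1) (by omega)
    have key := coeff_eq_s19 (lam1 + (b1 : ℂ) * ((a + 1 : ℕ) : ℂ)) (lam2 + (b2 : ℂ) * ((b + 1 : ℕ) : ℂ))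
      a b hx hy
    rw [mul_mul_mul_comm]
    rw [key]
    ring
end
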